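/- arXiv:0705.1927 — 8 statements merged into one kernel-verified Lean document; each statement's English description precedes it below -/
import Mathlib

section
/- Let 0 < d < 1/2. Let (a_j)_{j≥1} and (σ(m))_{m∈ℤ} be real sequences with σ(−m) = σ(m), such that for every δ > 0 there are constants C₁(δ) and C₃(δ) with |a_j| ≤ C₁(δ) j^(−d−1+δ) for all j ≥ 1 and |σ(m)| ≤ C₃(δ) |m|^(2d−1+δ) for all m ≠ 0, and σ(0) is finite. Then for every δ > 0, the tail double series satisfies |Σ_{j=k+1}^∞ Σ_{l=k+1}^∞ a_j a_l σ(l − j)| = O(k^(−1+δ)) as k → ∞. -/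
open Filter Real Asymptotics

/-- For `0 < d < 1/2`, if `|a j| ≤ C₁(δ) j^(-d-1+δ)` for `j ≥ 1` and the even
sequence `σ` satisfies `|σ m| ≤ C₃(δ) |m|^(2d-1+δ)` for `m ≠ 0` (for every `δ > 0`), then
for every `δ > 0` the tail double series `∑_{j,l > k} a j * a l * σ (l - j)` is
`O (k ^ (-1 + δ))` as `k → ∞`. -/
theorem stmt_2 (d : ℝ) (hd0 : 0 < d) (hd2 : d < 1 / 2) (a : ℕ → ℝ) (σ : ℤ → ℝ)
    (hσeven : ∀ m : ℤ, σ (-m) = σ m)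
    (ha : ∀ δ > (0 : ℝ), ∃ C₁ : ℝ, ∀ j : ℕ, 1 ≤ j → |a j| ≤ C₁ * (j : ℝ) ^ (-d - 1 + δ))
    (hσ : ∀ δ > (0 : ℝ), ∃ C₃ : ℝ, ∀ m : ℤ, m ≠ 0 →
      |σ m| ≤ C₃ * (|m| : ℝ) ^ (2 * d - 1 + δ)) :
    ∀ δ > (0 : ℝ),
      (fun k : ℕ => ∑' j : ℕ, ∑' l : ℕ, a (k + 1 + j) * a (k + 1 + l) * σ ((l : ℤ) - j))
        =O[atTop] fun k : ℕ => (k : ℝ) ^ (-1 + δ) := by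
  intro δ hδ
  set ε : ℝ := min δ 1 / 6 with hεdef
  have hε : 0 < ε := by
    have : 0 < min δ 1 := lt_min hδ one_pos
    rw [hεdef]; linarith
  have hε6 : ε ≤ 1 / 6 := by
    have := min_le_right δ 1
    rw [hεdef]; linarith
  have hεδ5 : 5 * ε ≤ δ := by
    have := min_le_left δ 1
    rw [hεdef]; linarith
  obtain ⟨C₁, hC₁⟩ := ha ε hε
  obtain ⟨C₃, hC₃⟩ := hσ ε hε
  set A : ℝ := max C₁ 0 with hAdef
  set B : ℝ := max C₃ 0 with hBdef
  have hA : 0 ≤ A := le_max_right _ _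
  have hB : 0 ≤ B := le_max_right _ _
  have hA' : ∀ j : ℕ, 1 ≤ j → |a j| ≤ A * (j : ℝ) ^ (-d - 1 + ε) := fun j hj =>
    (hC₁ j hj).trans (mul_le_mul_of_nonneg_right (le_max_left _ _)
      (Real.rpow_nonneg (Nat.cast_nonneg j) _))
  have hB' : ∀ m : ℤ, m ≠ 0 → |σ m| ≤ B * (|m| : ℝ) ^ (2 * d - 1 + ε) := fun m hm =>
    (hC₃ m hm).trans (mul_le_mul_of_nonneg_right (le_max_left _ _)
      (Real.rpow_nonneg (by positivity) _))
  set K : ℝ := A ^ 2 * (B + |σ 0|) with hKdef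
  have hK : 0 ≤ K := by
    rw [hKdef]
    exact mul_nonneg (sq_nonneg A) (add_nonneg hB (abs_nonneg _))
  -- the weight function on ℤ
  set g : ℤ → ℝ := fun m => if m = 0 then 1 else |(m : ℝ)| ^ (-1 - ε) with hgdef
  have hgnn : ∀ m, 0 ≤ g m := by
    intro m
    rw [hgdef]
    dsimp only
    split
    · norm_num
    · positivity
  have hgs : Summable g := by
    have h1 : Summable (fun m : ℤ => if m = 0 then (1 : ℝ) else 0) :=
      (hasSum_ite_eq (0 : ℤ) (1 : ℝ)).summable
    have h2 : Summable (fun m : ℤ => |(m : ℝ)| ^ (-1 - ε)) := by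
      have h := Real.summable_abs_int_rpow (b := 1 + ε) (by linarith)
      exact h.congr fun m => by congr 1; ring
    refine Summable.of_nonneg_of_le hgnn (fun m => ?_) (h1.add h2)
    rw [hgdef]
    dsimp only
    by_cases hm : m = 0
    · simp [hm, Real.zero_rpow (by linarith : -1 - ε ≠ 0)]
    · simp [hm]
  set T : ℝ := ∑' m, g m with hTdef
  -- the majorant on ℕ × ℕ
  set H : ℕ × ℕ → ℝ := fun p => ((p.1 : ℝ) + 1) ^ (-1 - ε) * g ((p.2 : ℤ) - (p.1 : ℤ))
    with hHdef
  have hHnn : ∀ p, 0 ≤ H p := by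
    intro p
    exact mul_nonneg (Real.rpow_nonneg (by positivity) _) (hgnn _)
  have hrow : ∀ x : ℕ, Summable fun y : ℕ => H (x, y) := by
    intro x
    have hinj : Function.Injective (fun y : ℕ => (y : ℤ) - (x : ℤ)) := by
      intro y₁ y₂ h
      simpa using h
    exact ((hgs.comp_injective hinj).mul_left (((x : ℝ) + 1) ^ (-1 - ε))).congr fun y => rfl
  have hrow_le : ∀ x : ℕ, ∑' y : ℕ, H (x, y) ≤ ((x : ℝ) + 1) ^ (-1 - ε) * T := by
    intro x
    have hinj : Function.Injective (fun y : ℕ => (y : ℤ) - (x : ℤ)) := by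
      intro y₁ y₂ h
      simpa using h
    have h1 : ∑' y : ℕ, g ((y : ℤ) - (x : ℤ)) ≤ T :=
      Summable.tsum_le_tsum_of_inj _ hinj (fun c _ => hgnn c) (fun y => le_rfl)
        (hgs.comp_injective hinj) hgs
    calc ∑' y : ℕ, H (x, y)
        = ((x : ℝ) + 1) ^ (-1 - ε) * ∑' y : ℕ, g ((y : ℤ) - (x : ℤ)) := by
          simp only [hHdef]; exact tsum_mul_left
      _ ≤ ((x : ℝ) + 1) ^ (-1 - ε) * T :=
          mul_le_mul_of_nonneg_left h1 (Real.rpow_nonneg (by positivity) _)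
  have hbase : Summable fun x : ℕ => ((x : ℝ) + 1) ^ (-1 - ε) := by
    have h := (summable_nat_add_iff (f := fun n : ℕ => (n : ℝ) ^ (-1 - ε)) 1).2
      (Real.summable_nat_rpow.mpr (by linarith))
    exact h.congr fun n => by push_cast; ring_nf
  have hHs : Summable H := by
    refine (summable_prod_of_nonneg hHnn).mpr ⟨hrow, ?_⟩
    exact Summable.of_nonneg_of_le (fun x => tsum_nonneg fun y => hHnn _)
      hrow_le (hbase.mul_right T)
  have hHs' : Summable fun p : ℕ × ℕ => H p.swap := hHs.prod_symm
  set M : ℕ × ℕ → ℝ := fun p => K * (H p + H p.swap) with hMdef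
  have hMnn : ∀ p, 0 ≤ M p := by
    intro p
    rw [hMdef]
    exact mul_nonneg hK (add_nonneg (hHnn _) (hHnn _))
  have hMs : Summable M := (hHs.add hHs').mul_left K
  set S : ℝ := ∑' p, M p with hSdef
  have hSnn : 0 ≤ S := tsum_nonneg hMnn
  -- key pointwise bound, first for j ≤ l
  have hkey₁ : ∀ (k j l : ℕ), j ≤ l →
      |a (k + 1 + j) * a (k + 1 + l) * σ ((l : ℤ) - (j : ℤ))| ≤
        ((k : ℝ) + 1) ^ (-1 + 5 * ε) * (K * H (j, l)) := by
    intro k j l hjl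
    have hJpos : (0 : ℝ) < ((k + 1 + j : ℕ) : ℝ) := by positivity
    have hLpos : (0 : ℝ) < ((k + 1 + l : ℕ) : ℝ) := by positivity
    have hJ1 : (1 : ℝ) ≤ ((k + 1 + j : ℕ) : ℝ) := by exact_mod_cast (by omega : 1 ≤ k + 1 + j)
    have hkJ : (k : ℝ) + 1 ≤ ((k + 1 + j : ℕ) : ℝ) := by
      push_cast; linarith [Nat.cast_nonneg (α := ℝ) j]
    have hjJ : (j : ℝ) + 1 ≤ ((k + 1 + j : ℕ) : ℝ) := by
      push_cast; linarith [Nat.cast_nonneg (α := ℝ) k]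
    have haJ := hA' (k + 1 + j) (by omega)
    have haL := hA' (k + 1 + l) (by omega)
    have hkpos : (0 : ℝ) < (k : ℝ) + 1 := by positivity
    have hjpos : (0 : ℝ) < (j : ℝ) + 1 := by positivity
    have c3 : ((k + 1 + j : ℕ) : ℝ) ^ (-1 + 5 * ε) ≤ ((k : ℝ) + 1) ^ (-1 + 5 * ε) :=
      Real.rpow_le_rpow_of_nonpos hkpos hkJ (by linarith)
    have c4 : ((k + 1 + j : ℕ) : ℝ) ^ (-1 - ε) ≤ ((j : ℝ) + 1) ^ (-1 - ε) :=
      Real.rpow_le_rpow_of_nonpos hjpos hjJ (by linarith)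
    have d6 : ((k + 1 + j : ℕ) : ℝ) ^ (-2 + 4 * ε) =
        ((k + 1 + j : ℕ) : ℝ) ^ (-1 + 5 * ε) * ((k + 1 + j : ℕ) : ℝ) ^ (-1 - ε) := by
      rw [← Real.rpow_add hJpos]; congr 1; ring
    have hsplit : ((k + 1 + j : ℕ) : ℝ) ^ (-2 + 4 * ε) ≤
        ((k : ℝ) + 1) ^ (-1 + 5 * ε) * ((j : ℝ) + 1) ^ (-1 - ε) := by
      rw [d6]
      exact mul_le_mul c3 c4 (Real.rpow_nonneg hJpos.le _) (Real.rpow_nonneg hkpos.le _)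
    rw [abs_mul, abs_mul]
    rcases eq_or_lt_of_le hjl with rfl | hlt
    · -- diagonal case
      have hg0 : g ((j : ℤ) - (j : ℤ)) = 1 := by rw [hgdef]; simp
      have hσ0 : σ ((j : ℤ) - (j : ℤ)) = σ 0 := by norm_num
      have hKge : A ^ 2 * |σ 0| ≤ K := by
        have h1 : (0 : ℝ) ≤ A ^ 2 * B := mul_nonneg (sq_nonneg A) hB
        have h2 : K = A ^ 2 * B + A ^ 2 * |σ 0| := by rw [hKdef]; ring
        linarith
      have hstep : |a (k + 1 + j)| * |a (k + 1 + j)| ≤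
          (A * ((k + 1 + j : ℕ) : ℝ) ^ (-d - 1 + ε)) *
          (A * ((k + 1 + j : ℕ) : ℝ) ^ (-d - 1 + ε)) :=
        mul_le_mul haJ haJ (abs_nonneg _) (mul_nonneg hA (Real.rpow_nonneg hJpos.le _))
      have hpow : ((k + 1 + j : ℕ) : ℝ) ^ (-d - 1 + ε) * ((k + 1 + j : ℕ) : ℝ) ^ (-d - 1 + ε)
          ≤ ((k + 1 + j : ℕ) : ℝ) ^ (-2 + 4 * ε) := by
        rw [← Real.rpow_add hJpos]
        exact Real.rpow_le_rpow_of_exponent_le hJ1 (by linarith)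
      calc |a (k + 1 + j)| * |a (k + 1 + j)| * |σ ((j : ℤ) - (j : ℤ))|
          ≤ (A * ((k + 1 + j : ℕ) : ℝ) ^ (-d - 1 + ε)) *
            (A * ((k + 1 + j : ℕ) : ℝ) ^ (-d - 1 + ε)) * |σ 0| := by
            rw [hσ0]
            exact mul_le_mul_of_nonneg_right hstep (abs_nonneg _)
        _ = (A ^ 2 * |σ 0|) * (((k + 1 + j : ℕ) : ℝ) ^ (-d - 1 + ε) *
            ((k + 1 + j : ℕ) : ℝ) ^ (-d - 1 + ε)) := by ring
        _ ≤ (A ^ 2 * |σ 0|) * (((k : ℝ) + 1) ^ (-1 + 5 * ε) * ((j : ℝ) + 1) ^ (-1 - ε)) :=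
            mul_le_mul_of_nonneg_left (hpow.trans hsplit) (by positivity)
        _ ≤ K * (((k : ℝ) + 1) ^ (-1 + 5 * ε) * ((j : ℝ) + 1) ^ (-1 - ε)) :=
            mul_le_mul_of_nonneg_right hKge (by positivity)
        _ = ((k : ℝ) + 1) ^ (-1 + 5 * ε) * (K * H (j, j)) := by
            rw [hHdef]; dsimp only; rw [hg0]; ring
    · -- off-diagonal case, j < l
      have hmpos : 0 < l - j := by omega
      have hmrpos : (0 : ℝ) < ((l - j : ℕ) : ℝ) := by exact_mod_cast hmpos
      have hmne : ((l : ℤ) - (j : ℤ)) ≠ 0 := by omega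
      have hbasee : (((l : ℤ) - (j : ℤ) : ℤ) : ℝ) = ((l - j : ℕ) : ℝ) := by
        push_cast [Nat.cast_sub hjl]
        ring
      have habs : |(((l : ℤ) - (j : ℤ) : ℤ) : ℝ)| = ((l - j : ℕ) : ℝ) := by
        rw [abs_of_nonneg (by rw [hbasee]; exact hmrpos.le)]
        exact hbasee
      have hσm : |σ ((l : ℤ) - (j : ℤ))| ≤ B * ((l - j : ℕ) : ℝ) ^ (2 * d - 1 + ε) := by
        have h := hB' ((l : ℤ) - (j : ℤ)) hmne
        rwa [habs] at h
      have hgval : g ((l : ℤ) - (j : ℤ)) = ((l - j : ℕ) : ℝ) ^ (-1 - ε) := by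
        rw [hgdef]
        dsimp only
        rw [if_neg hmne, habs]
      have hmrL : ((l - j : ℕ) : ℝ) ≤ ((k + 1 + l : ℕ) : ℝ) := by
        exact_mod_cast (by omega : l - j ≤ k + 1 + l)
      have hJL : ((k + 1 + j : ℕ) : ℝ) ≤ ((k + 1 + l : ℕ) : ℝ) := by
        exact_mod_cast (by omega : k + 1 + j ≤ k + 1 + l)
      have d1 : ((k + 1 + l : ℕ) : ℝ) ^ (-d - 1 + ε) =
          ((k + 1 + l : ℕ) : ℝ) ^ (-2 * d - 2 * ε) * ((k + 1 + l : ℕ) : ℝ) ^ (d - 1 + 3 * ε) := by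
        rw [← Real.rpow_add hLpos]; congr 1; ring
      have d2 : ((k + 1 + l : ℕ) : ℝ) ^ (-2 * d - 2 * ε) ≤ ((l - j : ℕ) : ℝ) ^ (-2 * d - 2 * ε) :=
        Real.rpow_le_rpow_of_nonpos hmrpos hmrL (by linarith)
      have d3 : ((k + 1 + l : ℕ) : ℝ) ^ (d - 1 + 3 * ε) ≤ ((k + 1 + j : ℕ) : ℝ) ^ (d - 1 + 3 * ε) :=
        Real.rpow_le_rpow_of_nonpos hJpos hJL (by linarith)
      have d4 : ((k + 1 + j : ℕ) : ℝ) ^ (-d - 1 + ε) * ((k + 1 + j : ℕ) : ℝ) ^ (d - 1 + 3 * ε) =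
          ((k + 1 + j : ℕ) : ℝ) ^ (-2 + 4 * ε) := by
        rw [← Real.rpow_add hJpos]; congr 1; ring
      have d5 : ((l - j : ℕ) : ℝ) ^ (2 * d - 1 + ε) * ((l - j : ℕ) : ℝ) ^ (-2 * d - 2 * ε) =
          ((l - j : ℕ) : ℝ) ^ (-1 - ε) := by
        rw [← Real.rpow_add hmrpos]; congr 1; ring
      have hKge : A * A * B ≤ K := by
        have h1 : (0 : ℝ) ≤ A ^ 2 * |σ 0| := mul_nonneg (sq_nonneg A) (abs_nonneg _)
        have h2 : K = A ^ 2 * B + A ^ 2 * |σ 0| := by rw [hKdef]; ring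
        have h3 : A * A * B = A ^ 2 * B := by ring
        linarith
      have core : ((k + 1 + j : ℕ) : ℝ) ^ (-d - 1 + ε) * ((k + 1 + l : ℕ) : ℝ) ^ (-d - 1 + ε) *
          ((l - j : ℕ) : ℝ) ^ (2 * d - 1 + ε) ≤
          ((k : ℝ) + 1) ^ (-1 + 5 * ε) * (((j : ℝ) + 1) ^ (-1 - ε) *
            ((l - j : ℕ) : ℝ) ^ (-1 - ε)) := by
        calc ((k + 1 + j : ℕ) : ℝ) ^ (-d - 1 + ε) * ((k + 1 + l : ℕ) : ℝ) ^ (-d - 1 + ε) *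
              ((l - j : ℕ) : ℝ) ^ (2 * d - 1 + ε)
            = ((k + 1 + j : ℕ) : ℝ) ^ (-d - 1 + ε) *
              (((k + 1 + l : ℕ) : ℝ) ^ (-2 * d - 2 * ε) *
                ((k + 1 + l : ℕ) : ℝ) ^ (d - 1 + 3 * ε)) *
              ((l - j : ℕ) : ℝ) ^ (2 * d - 1 + ε) := by rw [← d1]
          _ ≤ ((k + 1 + j : ℕ) : ℝ) ^ (-d - 1 + ε) *
              (((l - j : ℕ) : ℝ) ^ (-2 * d - 2 * ε) *
                ((k + 1 + j : ℕ) : ℝ) ^ (d - 1 + 3 * ε)) *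
              ((l - j : ℕ) : ℝ) ^ (2 * d - 1 + ε) := by
              refine mul_le_mul_of_nonneg_right (mul_le_mul_of_nonneg_left ?_
                (Real.rpow_nonneg hJpos.le _)) (Real.rpow_nonneg hmrpos.le _)
              exact mul_le_mul d2 d3 (Real.rpow_nonneg hLpos.le _) (Real.rpow_nonneg hmrpos.le _)
          _ = (((k + 1 + j : ℕ) : ℝ) ^ (-d - 1 + ε) * ((k + 1 + j : ℕ) : ℝ) ^ (d - 1 + 3 * ε)) *
              (((l - j : ℕ) : ℝ) ^ (2 * d - 1 + ε) * ((l - j : ℕ) : ℝ) ^ (-2 * d - 2 * ε)) := by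
              ring
          _ = ((k + 1 + j : ℕ) : ℝ) ^ (-2 + 4 * ε) * ((l - j : ℕ) : ℝ) ^ (-1 - ε) := by
              rw [d4, d5]
          _ ≤ (((k : ℝ) + 1) ^ (-1 + 5 * ε) * ((j : ℝ) + 1) ^ (-1 - ε)) *
              ((l - j : ℕ) : ℝ) ^ (-1 - ε) :=
              mul_le_mul_of_nonneg_right hsplit (Real.rpow_nonneg hmrpos.le _)
          _ = ((k : ℝ) + 1) ^ (-1 + 5 * ε) * (((j : ℝ) + 1) ^ (-1 - ε) *
              ((l - j : ℕ) : ℝ) ^ (-1 - ε)) := by ring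
      calc |a (k + 1 + j)| * |a (k + 1 + l)| * |σ ((l : ℤ) - (j : ℤ))|
          ≤ (A * ((k + 1 + j : ℕ) : ℝ) ^ (-d - 1 + ε)) *
            (A * ((k + 1 + l : ℕ) : ℝ) ^ (-d - 1 + ε)) *
            (B * ((l - j : ℕ) : ℝ) ^ (2 * d - 1 + ε)) :=
            mul_le_mul (mul_le_mul haJ haL (abs_nonneg _)
                (mul_nonneg hA (Real.rpow_nonneg hJpos.le _)))
              hσm (abs_nonneg _)
              (mul_nonneg (mul_nonneg hA (Real.rpow_nonneg hJpos.le _))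
                (mul_nonneg hA (Real.rpow_nonneg hLpos.le _)))
        _ = (A * A * B) * (((k + 1 + j : ℕ) : ℝ) ^ (-d - 1 + ε) *
            ((k + 1 + l : ℕ) : ℝ) ^ (-d - 1 + ε) * ((l - j : ℕ) : ℝ) ^ (2 * d - 1 + ε)) := by
            ring
        _ ≤ (A * A * B) * (((k : ℝ) + 1) ^ (-1 + 5 * ε) * (((j : ℝ) + 1) ^ (-1 - ε) *
            ((l - j : ℕ) : ℝ) ^ (-1 - ε))) :=
            mul_le_mul_of_nonneg_left core (mul_nonneg (mul_nonneg hA hA) hB)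
        _ ≤ K * (((k : ℝ) + 1) ^ (-1 + 5 * ε) * (((j : ℝ) + 1) ^ (-1 - ε) *
            ((l - j : ℕ) : ℝ) ^ (-1 - ε))) :=
            mul_le_mul_of_nonneg_right hKge (by positivity)
        _ = ((k : ℝ) + 1) ^ (-1 + 5 * ε) * (K * H (j, l)) := by
            rw [hHdef]; dsimp only; rw [hgval]; ring
  -- key pointwise bound for all pairs
  have hkey : ∀ (k : ℕ) (p : ℕ × ℕ),
      |a (k + 1 + p.1) * a (k + 1 + p.2) * σ ((p.2 : ℤ) - (p.1 : ℤ))| ≤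
        ((k : ℝ) + 1) ^ (-1 + 5 * ε) * M p := by
    intro k p
    obtain ⟨j, l⟩ := p
    have hxnn : (0 : ℝ) ≤ ((k : ℝ) + 1) ^ (-1 + 5 * ε) := Real.rpow_nonneg (by positivity) _
    have hswap : ((j, l) : ℕ × ℕ).swap = (l, j) := rfl
    have hM1 : K * H (j, l) ≤ M (j, l) := by
      rw [hMdef]
      dsimp only
      rw [hswap, mul_add]
      linarith [mul_nonneg hK (hHnn (l, j))]
    have hM2 : K * H (l, j) ≤ M (j, l) := by
      rw [hMdef]
      dsimp only
      rw [hswap, mul_add]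
      linarith [mul_nonneg hK (hHnn (j, l))]
    rcases le_total j l with hjl | hlj
    · exact (hkey₁ k j l hjl).trans (mul_le_mul_of_nonneg_left hM1 hxnn)
    · have hsym : σ ((l : ℤ) - (j : ℤ)) = σ ((j : ℤ) - (l : ℤ)) := by
        rw [show (l : ℤ) - (j : ℤ) = -((j : ℤ) - (l : ℤ)) by ring, hσeven]
      have heq : a (k + 1 + j) * a (k + 1 + l) * σ ((l : ℤ) - (j : ℤ)) =
          a (k + 1 + l) * a (k + 1 + j) * σ ((j : ℤ) - (l : ℤ)) := by
        rw [hsym]; ring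
      dsimp only
      rw [heq]
      exact (hkey₁ k l j hlj).trans (mul_le_mul_of_nonneg_left hM2 hxnn)
  -- conclusion
  rw [isBigO_iff]
  refine ⟨S, ?_⟩
  filter_upwards [eventually_ge_atTop 1] with k hk
  have hk1 : (1 : ℝ) ≤ (k : ℝ) := by exact_mod_cast hk
  have hFabs : Summable fun p : ℕ × ℕ =>
      |a (k + 1 + p.1) * a (k + 1 + p.2) * σ ((p.2 : ℤ) - (p.1 : ℤ))| :=
    Summable.of_nonneg_of_le (fun p => abs_nonneg _) (fun p => hkey k p) (hMs.mul_left _)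
  have hFs : Summable fun p : ℕ × ℕ =>
      a (k + 1 + p.1) * a (k + 1 + p.2) * σ ((p.2 : ℤ) - (p.1 : ℤ)) := hFabs.of_abs
  have h1 : (∑' j : ℕ, ∑' l : ℕ, a (k + 1 + j) * a (k + 1 + l) * σ ((l : ℤ) - (j : ℤ))) =
      ∑' p : ℕ × ℕ, a (k + 1 + p.1) * a (k + 1 + p.2) * σ ((p.2 : ℤ) - (p.1 : ℤ)) :=
    (Summable.tsum_prod' hFs fun j => hFs.prod_factor j).symm
  have h2 : |∑' p : ℕ × ℕ, a (k + 1 + p.1) * a (k + 1 + p.2) * σ ((p.2 : ℤ) - (p.1 : ℤ))| ≤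
      ∑' p : ℕ × ℕ, |a (k + 1 + p.1) * a (k + 1 + p.2) * σ ((p.2 : ℤ) - (p.1 : ℤ))| := by
    have hn : Summable fun p : ℕ × ℕ =>
        ‖a (k + 1 + p.1) * a (k + 1 + p.2) * σ ((p.2 : ℤ) - (p.1 : ℤ))‖ :=
      hFabs.congr fun p => (Real.norm_eq_abs _).symm
    simpa only [Real.norm_eq_abs] using norm_tsum_le_tsum_norm hn
  have h3 : (∑' p : ℕ × ℕ, |a (k + 1 + p.1) * a (k + 1 + p.2) * σ ((p.2 : ℤ) - (p.1 : ℤ))|) ≤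
      ∑' p : ℕ × ℕ, ((k : ℝ) + 1) ^ (-1 + 5 * ε) * M p :=
    Summable.tsum_le_tsum (fun p => hkey k p) hFabs (hMs.mul_left _)
  have h4 : (∑' p : ℕ × ℕ, ((k : ℝ) + 1) ^ (-1 + 5 * ε) * M p) =
      ((k : ℝ) + 1) ^ (-1 + 5 * ε) * S := by
    rw [hSdef]; exact tsum_mul_left
  have h5 : ((k : ℝ) + 1) ^ (-1 + 5 * ε) ≤ (k : ℝ) ^ (-1 + δ) := by
    calc ((k : ℝ) + 1) ^ (-1 + 5 * ε) ≤ (k : ℝ) ^ (-1 + 5 * ε) :=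
          Real.rpow_le_rpow_of_nonpos (by linarith) (by linarith) (by linarith)
      _ ≤ (k : ℝ) ^ (-1 + δ) := Real.rpow_le_rpow_of_exponent_le hk1 (by linarith)
  have h6 : (0 : ℝ) ≤ (k : ℝ) ^ (-1 + δ) := Real.rpow_nonneg (by positivity) _
  simp only [Real.norm_eq_abs]
  calc |∑' j : ℕ, ∑' l : ℕ, a (k + 1 + j) * a (k + 1 + l) * σ ((l : ℤ) - (j : ℤ))|
      = |∑' p : ℕ × ℕ, a (k + 1 + p.1) * a (k + 1 + p.2) * σ ((p.2 : ℤ) - (p.1 : ℤ))| := by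
        rw [h1]
    _ ≤ ∑' p : ℕ × ℕ, |a (k + 1 + p.1) * a (k + 1 + p.2) * σ ((p.2 : ℤ) - (p.1 : ℤ))| := h2
    _ ≤ ((k : ℝ) + 1) ^ (-1 + 5 * ε) * S := by rw [← h4]; exact h3
    _ ≤ (k : ℝ) ^ (-1 + δ) * S := mul_le_mul_of_nonneg_right h5 hSnn
    _ = S * |(k : ℝ) ^ (-1 + δ)| := by rw [abs_of_nonneg h6]; ring
end

section
/- Let (Ω, F, P) be a probability space and (ε_n)_{n∈ℤ} a family of real random variables in L²(P) with E[ε_n] = 0, E[ε_n ε_m] = σ_ε² · 1_{n=m}, where σ_ε² > 0. Let (a_j)_{j≥0} and (b_j)_{j≥0} be real sequences with a_0 = b_0 = 1, Σ_j |a_j| < ∞ and Σ_j b_j² < ∞, and suppose that for every n the series X_n := Σ_{j=0}^∞ b_j ε_{n−j} converges in L²(P) and that ε_n = Σ_{j=0}^∞ a_j X_{n−j} with convergence in L²(P). Let σ(m) := E[X_n X_{n+m}] (independent of n). Then for every k ≥ 1, the truncated Wiener–Kolmogorov predictor X'_k(1) := −Σ_{j=1}^k a_j X_{k+1−j} satisfies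 E[(X_{k+1} − X'_k(1))²] = σ_ε² + Σ_{j=k+1}^∞ Σ_{l=k+1}^∞ a_j a_l σ(l − j), the double series converging absolutely. -/
open Filter MeasureTheory

open scoped RealInnerProductSpace

private lemma lp2_coeFn_sum {Ω : Type*} [MeasurableSpace Ω] {P : Measure Ω} {ι : Type*}
    (s : Finset ι) (f : ι → Lp ℝ 2 P) :
    (⇑(∑ i ∈ s, f i)) =ᵐ[P] fun ω => ∑ i ∈ s, f i ω := by
  classical
  induction s using Finset.induction_on with
  | empty => exact Lp.coeFn_zero ℝ 2 P
  | insert i s h ih =>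
    rw [Finset.sum_insert h]
    filter_upwards [Lp.coeFn_add (f i) (∑ j ∈ s, f j), ih] with ω h1 h2
    rw [h1, Pi.add_apply, h2, Finset.sum_insert h]

private lemma lp2_inner_eq {Ω : Type*} [MeasurableSpace Ω] {P : Measure Ω} (F G : Lp ℝ 2 P) :
    ⟪F, G⟫ = ∫ ω, F ω * G ω ∂P := by
  rw [MeasureTheory.L2.inner_def]; congr 1; funext ω; simp [RCLike.inner_apply, mul_comm]

/-- For a white noise `(ε n)` with variance `σε2`, a linear process
`X n = ∑ b j ε (n - j)` (in L²) with AR(∞) representation `ε n = ∑ a j X (n - j)` (in L²),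
`a 0 = b 0 = 1`, `∑ |a j| < ∞`, `∑ b j ² < ∞`, and autocovariance `σ m = E[X n X (n+m)]`,
the truncated Wiener–Kolmogorov predictor `X'_k(1) = -∑_{j=1}^k a j X (k+1-j)` satisfies
`E[(X (k+1) - X'_k(1))²] = σε2 + ∑_{j,l ≥ k+1} a j a l σ (l - j)`, the double series
converging absolutely. -/
theorem stmt_3 {Ω : Type*} [MeasurableSpace Ω] (P : Measure Ω) [IsProbabilityMeasure P]
    (ε X : ℤ → Ω → ℝ) (σε2 : ℝ) (hσε2 : 0 < σε2) (a b : ℕ → ℝ) (σ : ℤ → ℝ)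
    (hε2 : ∀ n, MemLp (ε n) 2 P) (hX2 : ∀ n, MemLp (X n) 2 P)
    (hmean : ∀ n, ∫ ω, ε n ω ∂P = 0)
    (hcov : ∀ n m, ∫ ω, ε n ω * ε m ω ∂P = if n = m then σε2 else 0)
    (ha0 : a 0 = 1) (hb0 : b 0 = 1)
    (haSum : Summable fun j => |a j|) (hbSum : Summable fun j => (b j) ^ 2)
    (hMA : ∀ n : ℤ, Tendsto
      (fun N : ℕ => eLpNorm (fun ω => X n ω - ∑ j ∈ Finset.range N, b j * ε (n - j) ω) 2 P)
      atTop (nhds 0))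
    (hAR : ∀ n : ℤ, Tendsto
      (fun N : ℕ => eLpNorm (fun ω => ε n ω - ∑ j ∈ Finset.range N, a j * X (n - j) ω) 2 P)
      atTop (nhds 0))
    (hσ : ∀ n m : ℤ, ∫ ω, X n ω * X (n + m) ω ∂P = σ m) :
    ∀ k : ℕ, 1 ≤ k →
      Summable (fun p : ℕ × ℕ =>
        |a (k + 1 + p.1) * a (k + 1 + p.2) * σ ((p.2 : ℤ) - p.1)|) ∧
      ∫ ω, (X ((k : ℤ) + 1) ω - (- ∑ j ∈ Finset.Icc 1 k, a j * X ((k : ℤ) + 1 - j) ω)) ^ 2 ∂P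
        = σε2 + ∑' j : ℕ, ∑' l : ℕ, a (k + 1 + j) * a (k + 1 + l) * σ ((l : ℤ) - j) := by
  classical
  intro k hk
  set x : ℤ → Lp ℝ 2 P := fun n => (hX2 n).toLp (X n) with hxdef
  set e : ℤ → Lp ℝ 2 P := fun n => (hε2 n).toLp (ε n) with hedef
  -- coercion of partial sums
  have hxcoe : ∀ (n : ℤ) (c : ℕ → ℝ) (N : ℕ),
      (⇑(∑ j ∈ Finset.range N, c j • x (n - j))) =ᵐ[P]
        fun ω => ∑ j ∈ Finset.range N, c j * X (n - j) ω := by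
    intro n c N
    filter_upwards [lp2_coeFn_sum (Finset.range N) (fun j => c j • x (n - j)),
      eventually_all_finite (Finset.range N).finite_toSet |>.2
        (fun j _ => ((Lp.coeFn_smul (c j) (x (n - j))).and ((hX2 (n - j)).coeFn_toLp)))]
      with ω h1 h2
    rw [h1]
    refine Finset.sum_congr rfl fun j hj => ?_
    obtain ⟨hs, ht⟩ := h2 j hj
    rw [hs, Pi.smul_apply, smul_eq_mul, ht]
  have hecoe : ∀ (n : ℤ) (c : ℕ → ℝ) (N : ℕ),
      (⇑(∑ j ∈ Finset.range N, c j • e (n - j))) =ᵐ[P]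
        fun ω => ∑ j ∈ Finset.range N, c j * ε (n - j) ω := by
    intro n c N
    filter_upwards [lp2_coeFn_sum (Finset.range N) (fun j => c j • e (n - j)),
      eventually_all_finite (Finset.range N).finite_toSet |>.2
        (fun j _ => ((Lp.coeFn_smul (c j) (e (n - j))).and ((hε2 (n - j)).coeFn_toLp)))]
      with ω h1 h2
    rw [h1]
    refine Finset.sum_congr rfl fun j hj => ?_
    obtain ⟨hs, ht⟩ := h2 j hj
    rw [hs, Pi.smul_apply, smul_eq_mul, ht]
  -- L² convergence in Lp space form
  have hARlim : ∀ n : ℤ, Tendsto (fun N : ℕ => ∑ j ∈ Finset.range N, a j • x (n - j))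
      atTop (nhds (e n)) := by
    intro n
    rw [tendsto_iff_norm_sub_tendsto_zero]
    have key : ∀ N : ℕ, ‖(∑ j ∈ Finset.range N, a j • x (n - j)) - e n‖
        = (eLpNorm (fun ω => ε n ω - ∑ j ∈ Finset.range N, a j * X (n - j) ω) 2 P).toReal := by
      intro N
      rw [Lp.norm_def]
      congr 1
      have := (Lp.coeFn_sub (∑ j ∈ Finset.range N, a j • x (n - j)) (e n)).trans
        ((hxcoe n a N).sub ((hε2 n).coeFn_toLp))
      rw [eLpNorm_congr_ae this, ← eLpNorm_neg]
      congr 1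
      funext ω
      simp [Pi.sub_apply]
    simp_rw [key]
    have : Tendsto ENNReal.toReal (nhds (0 : ENNReal)) (nhds 0) := by
      simpa using ENNReal.tendsto_toReal (a := 0) (by simp)
    exact this.comp (hAR n)
  have hMAlim : ∀ n : ℤ, Tendsto (fun N : ℕ => ∑ j ∈ Finset.range N, b j • e (n - j))
      atTop (nhds (x n)) := by
    intro n
    rw [tendsto_iff_norm_sub_tendsto_zero]
    have key : ∀ N : ℕ, ‖(∑ j ∈ Finset.range N, b j • e (n - j)) - x n‖
        = (eLpNorm (fun ω => X n ω - ∑ j ∈ Finset.range N, b j * ε (n - j) ω) 2 P).toReal := by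
      intro N
      rw [Lp.norm_def]
      congr 1
      have := (Lp.coeFn_sub (∑ j ∈ Finset.range N, b j • e (n - j)) (x n)).trans
        ((hecoe n b N).sub ((hX2 n).coeFn_toLp))
      rw [eLpNorm_congr_ae this, ← eLpNorm_neg]
      congr 1
      funext ω
      simp [Pi.sub_apply]
    simp_rw [key]
    have : Tendsto ENNReal.toReal (nhds (0 : ENNReal)) (nhds 0) := by
      simpa using ENNReal.tendsto_toReal (a := 0) (by simp)
    exact this.comp (hMA n)
  -- inner products
  have hee : ∀ n m : ℤ, ⟪e n, e m⟫ = if n = m then σε2 else 0 := by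
    intro n m
    rw [lp2_inner_eq, ← hcov n m]
    exact integral_congr_ae (((hε2 n).coeFn_toLp).mul ((hε2 m).coeFn_toLp))
  have hxxσ : ∀ n m : ℤ, ⟪x n, x m⟫ = σ (m - n) := by
    intro n m
    rw [lp2_inner_eq]
    have := hσ n (m - n)
    rw [add_sub_cancel] at this
    rw [← this]
    exact integral_congr_ae (((hX2 n).coeFn_toLp).mul ((hX2 m).coeFn_toLp))
  have hσsym : ∀ m : ℤ, σ (-m) = σ m := by
    intro m
    have h1 : ⟪x 0, x (-m)⟫ = σ (-m) := by simpa using hxxσ 0 (-m)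
    have h2 : ⟪x (-m), x 0⟫ = σ m := by simpa using hxxσ (-m) 0
    rw [← h1, ← h2, real_inner_comm]
  -- ⟪e n, x m⟫ = 0 for m < n
  have hex : ∀ n m : ℤ, m < n → ⟪e n, x m⟫ = 0 := by
    intro n m hmn
    have h1 : Tendsto (fun N : ℕ => ⟪e n, ∑ j ∈ Finset.range N, b j • e (m - j)⟫)
        atTop (nhds ⟪e n, x m⟫) := Filter.Tendsto.inner tendsto_const_nhds (hMAlim m)
    have h2 : ∀ N : ℕ, ⟪e n, ∑ j ∈ Finset.range N, b j • e (m - j)⟫ = 0 := by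
      intro N
      rw [inner_sum]
      refine Finset.sum_eq_zero fun j _ => ?_
      rw [real_inner_smul_right, hee]
      rw [if_neg]
      · ring
      · omega
    simp_rw [h2] at h1
    exact tendsto_nhds_unique h1 tendsto_const_nhds
  -- bound on σ
  have hnorm : ∀ n : ℤ, ‖x n‖ = Real.sqrt (σ 0) := by
    intro n
    have := hxxσ n n
    rw [sub_self, real_inner_self_eq_norm_sq] at this
    rw [← this, Real.sqrt_sq (norm_nonneg _)]
  have hσ0 : 0 ≤ σ 0 := by
    have := hxxσ 0 0
    rw [sub_self, real_inner_self_eq_norm_sq] at this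
    rw [← this]; positivity
  have hσbd : ∀ m : ℤ, |σ m| ≤ σ 0 := by
    intro m
    have := abs_real_inner_le_norm (x 0) (x m)
    rw [hxxσ 0 m, hnorm, hnorm, Real.mul_self_sqrt hσ0] at this
    simpa using this
  -- summability
  set f : ℕ × ℕ → ℝ := fun p => a (k + 1 + p.1) * a (k + 1 + p.2) * σ ((p.2 : ℤ) - p.1)
    with hfdef
  have ha' : Summable fun p : ℕ => |a (k + 1 + p)| := by
    have := (summable_nat_add_iff (k + 1)).2 haSum
    exact this.congr fun p => by rw [add_comm]
  have habs : Summable fun p : ℕ × ℕ => |f p| := by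
    refine Summable.of_nonneg_of_le (fun p => abs_nonneg _) (fun p => ?_)
      (Summable.mul_of_nonneg ha' (ha'.mul_right (σ 0))
        (fun p => abs_nonneg _) (fun p => mul_nonneg (abs_nonneg _) hσ0))
    show |f p| ≤ |a (k + 1 + p.1)| * (|a (k + 1 + p.2)| * σ 0)
    rw [hfdef]
    simp only [abs_mul]
    rw [mul_assoc]
    exact mul_le_mul_of_nonneg_left
      (mul_le_mul_of_nonneg_left (hσbd _) (abs_nonneg _)) (abs_nonneg _)
  have hfsum : Summable f := habs.of_abs
  refine ⟨habs, ?_⟩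
  -- main computation
  set K : ℤ := (k : ℤ) + 1 with hKdef
  set G : Lp ℝ 2 P := ∑ j ∈ Finset.range (k + 1), a j • x (K - j) with hGdef
  set T : Lp ℝ 2 P := e K - G with hTdef
  have hFG : Tendsto (fun N : ℕ => (∑ j ∈ Finset.range N, a j • x (K - j)) - G)
      atTop (nhds T) := (hARlim K).sub tendsto_const_nhds
  -- LHS equals ⟪G, G⟫
  have hLHS : ∫ ω, (X ((k : ℤ) + 1) ω
      - (- ∑ j ∈ Finset.Icc 1 k, a j * X ((k : ℤ) + 1 - j) ω)) ^ 2 ∂P = ⟪G, G⟫ := by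
    rw [lp2_inner_eq]
    refine (integral_congr_ae ?_).symm
    filter_upwards [hxcoe K a (k + 1)] with ω h1
    rw [h1]
    have hins : Finset.range (k + 1) = insert 0 (Finset.Icc 1 k) := by
      ext i
      simp [Nat.lt_succ_iff]
      omega
    rw [← sq]
    congr 1
    rw [hins, Finset.sum_insert (by simp)]
    simp [ha0, hKdef]
  rw [hLHS]
  -- ⟪e K, T⟫ = 0
  have heT : ⟪e K, T⟫ = 0 := by
    have h1 : Tendsto (fun N : ℕ => ⟪e K, (∑ j ∈ Finset.range N, a j • x (K - j)) - G⟫)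
        atTop (nhds ⟪e K, T⟫) := Filter.Tendsto.inner tendsto_const_nhds hFG
    have h2 : ∀ᶠ N : ℕ in atTop,
        ⟪e K, (∑ j ∈ Finset.range N, a j • x (K - j)) - G⟫ = 0 := by
      filter_upwards [eventually_ge_atTop (k + 1)] with N hN
      rw [hGdef, ← Finset.sum_Ico_eq_sub _ hN, inner_sum]
      refine Finset.sum_eq_zero fun j hj => ?_
      rw [real_inner_smul_right, hex K (K - j) (by
        rw [Finset.mem_Ico] at hj
        have : (1 : ℤ) ≤ (j : ℤ) := by exact_mod_cast Nat.one_le_iff_ne_zero.2 (by omega)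
        omega)]
      ring
    have h3 : Tendsto (fun N : ℕ => ⟪e K, (∑ j ∈ Finset.range N, a j • x (K - j)) - G⟫)
        atTop (nhds 0) := Tendsto.congr' (h2.mono fun N hN => hN.symm) tendsto_const_nhds
    exact tendsto_nhds_unique h1 h3
  -- ⟪T, T⟫ = tsum
  have hTT : ⟪T, T⟫ = ∑' p : ℕ × ℕ, f p := by
    have h1 : Tendsto (fun N : ℕ => ⟪(∑ j ∈ Finset.range N, a j • x (K - j)) - G,
        (∑ j ∈ Finset.range N, a j • x (K - j)) - G⟫) atTop (nhds ⟪T, T⟫) :=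
      Filter.Tendsto.inner hFG hFG
    have hsq : Tendsto (fun M : ℕ => ∑ p ∈ Finset.range M ×ˢ Finset.range M, f p)
        atTop (nhds (∑' p : ℕ × ℕ, f p)) := by
      refine hfsum.hasSum.comp (tendsto_atTop_finset_of_monotone ?_ ?_)
      · intro M M' hMM'
        exact Finset.product_subset_product (Finset.range_subset_range.2 hMM')
          (Finset.range_subset_range.2 hMM')
      · intro p
        exact ⟨max p.1 p.2 + 1, by simp [Finset.mem_product, Nat.lt_succ_iff]⟩
    have h2 : ∀ᶠ N : ℕ in atTop,
        ∑ p ∈ Finset.range (N - (k + 1)) ×ˢ Finset.range (N - (k + 1)), f p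
        = ⟪(∑ j ∈ Finset.range N, a j • x (K - j)) - G,
            (∑ j ∈ Finset.range N, a j • x (K - j)) - G⟫ := by
      filter_upwards [eventually_ge_atTop (k + 1)] with N hN
      rw [hGdef, ← Finset.sum_Ico_eq_sub _ hN, Finset.sum_Ico_eq_sum_range,
        Finset.sum_product]
      rw [sum_inner]
      refine Finset.sum_congr rfl fun p _ => ?_
      rw [real_inner_smul_left, inner_sum, Finset.mul_sum]
      refine Finset.sum_congr rfl fun q _ => ?_
      rw [real_inner_smul_right, hxxσ]
      have harg : K - ↑(k + 1 + q) - (K - ↑(k + 1 + p)) = -(((q : ℤ)) - p) := by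
        push_cast
        ring
      rw [harg, hσsym]
      rw [hfdef]
      ring
    have h3 : Tendsto (fun N : ℕ =>
        ∑ p ∈ Finset.range (N - (k + 1)) ×ˢ Finset.range (N - (k + 1)), f p)
        atTop (nhds (∑' p : ℕ × ℕ, f p)) := hsq.comp (tendsto_sub_atTop_nat (k + 1))
    exact tendsto_nhds_unique h1 (Tendsto.congr' h2 h3)
  -- put together
  have hG2 : e K - T = G := by rw [hTdef]; abel
  calc ⟪G, G⟫ = ⟪e K - T, e K - T⟫ := by rw [hG2]
    _ = ⟪e K, e K⟫ - ⟪e K, T⟫ - (⟪T, e K⟫ - ⟪T, T⟫) := by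
        rw [inner_sub_left]
        rw [inner_sub_right (𝕜 := ℝ) (e K) (e K) T]
        rw [inner_sub_right (𝕜 := ℝ) T (e K) T]
    _ = σε2 + ∑' j : ℕ, ∑' l : ℕ, a (k + 1 + j) * a (k + 1 + l) * σ ((l : ℤ) - j) := by
        rw [real_inner_comm (e K) T, heT, hTT, hee, if_pos rfl,
          Summable.tsum_prod hfsum]
        simp only [hfdef]
        ring
end

section
/- For 0 < d < 1/2 and σ_ε² > 0, let a_0 = 1, a_l = Γ(l−d)/(Γ(l+1)Γ(−d)) for l ≥ 1, and σ(m) = σ_ε² Γ(1−2d) Γ(|m|+d)/(Γ(d) Γ(1−d) Γ(|m|+1−d)) for m ∈ ℤ. Then for every integer j ≥ 1, the series Σ_{l=0}^∞ a_l σ(l − j) converges absolutely and equals 0. -/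
open Real

section Stmt10Aux

open Finset Filter

open Real Finset Filter

/-- ascending factorial (Pochhammer) of a real. -/
noncomputable def stmt10asc (x : ℝ) : ℕ → ℝ
  | 0 => 1
  | n+1 => stmt10asc x n * (x + n)

lemma stmt10asc_succ (x : ℝ) (n : ℕ) : stmt10asc x (n+1) = stmt10asc x n * (x + n) := rfl

lemma stmt10asc_succ' (x : ℝ) (n : ℕ) : stmt10asc x (n+1) = x * stmt10asc (x+1) n := by
  induction n with
  | zero => simp [stmt10asc]
  | succ n ih =>
      rw [stmt10asc_succ, ih, stmt10asc_succ]
      push_cast; ring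

lemma stmt10asc_reflect (x : ℝ) (n : ℕ) :
    stmt10asc (x - n) n = (-1)^n * stmt10asc (1-x) n := by
  induction n with
  | zero => simp [stmt10asc]
  | succ n ih =>
      rw [stmt10asc_succ' , stmt10asc_succ]
      have : x - (n+1:ℕ) + 1 = x - n := by push_cast; ring
      rw [this, ih]
      push_cast; ring

/-- Vandermonde-Chu for ascending factorials. -/
lemma stmt10asc_vandermonde (x y : ℝ) (n : ℕ) :
    ∑ i ∈ range (n+1), (n.choose i : ℝ) * stmt10asc x i * stmt10asc y (n-i)
      = stmt10asc (x+y) n := by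
  induction n with
  | zero => simp [stmt10asc]
  | succ n ih =>
      have key : ∀ i ∈ range (n+1), (n.choose i : ℝ) * stmt10asc x i * stmt10asc y (n-i) * (x+y+n)
          = (n.choose i : ℝ) * stmt10asc x (i+1) * stmt10asc y (n-i)
            + (n.choose i : ℝ) * stmt10asc x i * stmt10asc y (n+1-i) := by
        intro i hi
        have hin : i ≤ n := by simpa using Nat.lt_succ_iff.mp (mem_range.mp hi)
        have h1 : n + 1 - i = (n - i) + 1 := by omega
        have h2 : ((n - i : ℕ) : ℝ) = (n : ℝ) - i := by
          push_cast [Nat.cast_sub hin]; ring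
        rw [h1, stmt10asc_succ, stmt10asc_succ, h2]
        ring
      calc ∑ i ∈ range (n+2), ((n+1).choose i : ℝ) * stmt10asc x i * stmt10asc y (n+1-i)
          = stmt10asc y (n+1)
            + ∑ i ∈ range (n+1), ((n+1).choose (i+1) : ℝ) * stmt10asc x (i+1) * stmt10asc y (n-i) := by
            rw [Finset.sum_range_succ' (fun i => ((n+1).choose i : ℝ) * stmt10asc x i * stmt10asc y (n+1-i)) (n+1)]
            have hc : ∀ i ∈ range (n+1),
                ((n+1).choose (i+1):ℝ) * stmt10asc x (i+1) * stmt10asc y (n+1-(i+1))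
                  = ((n+1).choose (i+1):ℝ) * stmt10asc x (i+1) * stmt10asc y (n-i) := by
              intro i _
              have h : n+1-(i+1) = n-i := by omega
              rw [h]
            rw [Finset.sum_congr rfl hc]
            have h0 : ((n+1).choose 0 : ℝ) * stmt10asc x 0 * stmt10asc y (n+1-0) = stmt10asc y (n+1) := by
              simp [stmt10asc]
            rw [h0, add_comm]
        _ = stmt10asc y (n+1)
            + (∑ i ∈ range (n+1), (n.choose i : ℝ) * stmt10asc x (i+1) * stmt10asc y (n-i)
               + ∑ i ∈ range (n+1), (n.choose (i+1) : ℝ) * stmt10asc x (i+1) * stmt10asc y (n-i)) := by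
            rw [← Finset.sum_add_distrib]
            congr 1
            apply Finset.sum_congr rfl
            intro i hi
            rw [Nat.choose_succ_succ]
            push_cast; ring
        _ = (∑ i ∈ range (n+1), (n.choose i : ℝ) * stmt10asc x (i+1) * stmt10asc y (n-i))
            + ∑ i ∈ range (n+1), (n.choose i : ℝ) * stmt10asc x i * stmt10asc y (n+1-i) := by
            have : ∑ i ∈ range (n+1), (n.choose (i+1) : ℝ) * stmt10asc x (i+1) * stmt10asc y (n-i)
                = ∑ i ∈ range (n+1), (n.choose i : ℝ) * stmt10asc x i * stmt10asc y (n+1-i)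
                  - stmt10asc y (n+1) := by
              rw [Finset.sum_range_succ' (fun i => (n.choose i : ℝ) * stmt10asc x i * stmt10asc y (n+1-i)) n]
              have hlast : ∀ i ∈ range n, (n.choose (i+1) : ℝ) * stmt10asc x (i+1) * stmt10asc y (n-i)
                  = (n.choose (i+1) : ℝ) * stmt10asc x (i+1) * stmt10asc y (n+1-(i+1)) := by
                intro i hi; congr 2; omega
              rw [Finset.sum_range_succ (fun i => (n.choose (i+1) : ℝ) * stmt10asc x (i+1) * stmt10asc y (n-i)) n]
              rw [Finset.sum_congr rfl hlast]
              simp [stmt10asc]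
            rw [this]; ring
        _ = ∑ i ∈ range (n+1), (n.choose i : ℝ) * stmt10asc x i * stmt10asc y (n-i) * (x+y+n) := by
            rw [Finset.sum_congr rfl key, Finset.sum_add_distrib]
        _ = stmt10asc (x+y) (n+1) := by
            rw [← Finset.sum_mul, ih, stmt10asc_succ]

lemma stmt10_gamma_asc (x : ℝ) (hx : ∀ k : ℕ, x + k ≠ 0) (n : ℕ) :
    Real.Gamma (x + n) = stmt10asc x n * Real.Gamma x := by
  induction n with
  | zero => simp [stmt10asc]
  | succ n ih =>
      have : x + (n+1:ℕ) = (x + n) + 1 := by push_cast; ring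
      rw [this, Real.Gamma_add_one (hx n), ih, stmt10asc_succ]
      ring

lemma stmt10_ne (c : ℝ) (h0 : 0 < c) (h1 : c < 1) (z : ℤ) : (z:ℝ) - c ≠ 0 := by
  intro h
  have hz : (z:ℝ) = c := by linarith
  have h0' : (0:ℤ) < z := by exact_mod_cast (show (0:ℝ) < (z:ℝ) by rw [hz]; exact h0)
  have h1' : z < 1 := by exact_mod_cast (show (z:ℝ) < 1 by rw [hz]; exact h1)
  omega

lemma stmt10_gamma_ne (c : ℝ) (h0 : 0 < c) (h1 : c < 1) (z : ℤ) :
    Real.Gamma ((z:ℝ) - c) ≠ 0 := by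
  apply Real.Gamma_ne_zero
  intro m h
  apply stmt10_ne c h0 h1 (z + m)
  push_cast
  linarith

lemma stmt10_reflect (d : ℝ) (hd0 : 0 < d) (hd1 : d < 1) (n : ℕ) :
    Real.Gamma ((n:ℝ) + d) / Real.Gamma ((n:ℝ) + 1 - d)
      = Real.Gamma (-(n:ℝ) + d) / Real.Gamma (-(n:ℝ) + 1 - d) := by
  have hd1' : 0 < 1 - d := by linarith
  have hGd : Real.Gamma d ≠ 0 := (Real.Gamma_pos_of_pos hd0).ne'
  have hG1d : Real.Gamma (1-d) ≠ 0 := (Real.Gamma_pos_of_pos hd1').ne'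
  have e1 : Real.Gamma ((n:ℝ) + d) = stmt10asc d n * Real.Gamma d := by
    have := stmt10_gamma_asc d (fun k => by positivity) n
    rw [← this]; ring_nf
  have e2 : Real.Gamma ((n:ℝ) + 1 - d) = stmt10asc (1-d) n * Real.Gamma (1-d) := by
    have := stmt10_gamma_asc (1-d) (fun k => by positivity) n
    rw [← this]; ring_nf
  have e3 : Real.Gamma d = stmt10asc (d - n) n * Real.Gamma (d - (n:ℝ)) := by
    have hx : ∀ k : ℕ, (d - (n:ℝ)) + k ≠ 0 := by
      intro k
      have := stmt10_ne d hd0 hd1 ((n:ℤ) - k)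
      intro h; apply this; push_cast; linarith
    have := stmt10_gamma_asc (d - (n:ℝ)) hx n
    rw [← this]; ring_nf
  have e4 : Real.Gamma (1-d) = stmt10asc (1 - d - n) n * Real.Gamma (1 - d - (n:ℝ)) := by
    have hx : ∀ k : ℕ, (1 - d - (n:ℝ)) + k ≠ 0 := by
      intro k
      have := stmt10_ne d hd0 hd1 ((n:ℤ) - 1 - k + 1)
      intro h
      have := stmt10_ne (1-d) hd1' (by linarith) ((n:ℤ) - k)
      apply this; push_cast; linarith
    have := stmt10_gamma_asc (1 - d - (n:ℝ)) hx n
    rw [← this]; ring_nf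
  have r1 : stmt10asc (d - n) n = (-1)^n * stmt10asc (1-d) n := stmt10asc_reflect d n
  have r2 : stmt10asc (1 - d - n) n = (-1)^n * stmt10asc d n := by
    have h := stmt10asc_reflect (1-d) n
    rw [show (1:ℝ) - (1-d) = d from by ring] at h
    exact h
  have hasc1 : stmt10asc (d - n) n ≠ 0 := by
    intro h; rw [h] at e3; simp at e3; exact hGd e3
  have hasc2 : stmt10asc (1 - d - n) n ≠ 0 := by
    intro h; rw [h] at e4; simp at e4; exact hG1d e4
  have hGdn : Real.Gamma (d - (n:ℝ)) ≠ 0 := by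
    intro h; rw [h] at e3; simp at e3; exact hGd e3
  have hG1dn : Real.Gamma (1 - d - (n:ℝ)) ≠ 0 := by
    intro h; rw [h] at e4; simp at e4; exact hG1d e4
  have hasc3 : stmt10asc (1-d) n ≠ 0 := by
    intro h; rw [h] at r1; simp at r1; exact hasc1 r1
  have hn1 : -(n:ℝ) + d = d - (n:ℝ) := by ring
  have hn2 : -(n:ℝ) + 1 - d = 1 - d - (n:ℝ) := by ring
  rw [hn1, hn2, e1, e2]
  have g3 : Real.Gamma (d - (n:ℝ)) = Real.Gamma d / stmt10asc (d - n) n := by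
    field_simp [e3]
    linear_combination -e3
  have g4 : Real.Gamma (1 - d - (n:ℝ)) = Real.Gamma (1-d) / stmt10asc (1 - d - n) n := by
    field_simp [e4]
    linear_combination -e4
  rw [g3, g4, r1, r2]
  have hneg : ((-1:ℝ))^n ≠ 0 := by positivity
  field_simp

lemma stmt10_GL (d : ℝ) (hd0 : 0 < d) (hd2 : d < 1/2) (j : ℕ) (hj : 1 ≤ j) (z : ℤ) :
    ∑ i ∈ range j, (((j-1).choose i : ℕ) : ℝ) * stmt10asc (1-2*d) i
        * Real.Gamma ((z:ℝ) - 1 + d - i)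
      = Real.Gamma ((z:ℝ) - d) * Real.Gamma ((z:ℝ) - j + d)
          / Real.Gamma ((z:ℝ) - j + 1 - d) := by
  have hd1 : d < 1 := by linarith
  set n := j - 1 with hndef
  have hn : n + 1 = j := by omega
  have hcast : ((n:ℕ):ℝ) = (j:ℝ) - 1 := by
    have h1 := hn
    push_cast [← h1]
    ring
  set y : ℝ := (z:ℝ) - j + d with hydef
  have hy : ∀ k : ℕ, y + k ≠ 0 := by
    intro k
    have h := stmt10_ne d hd0 hd1 ((j:ℤ) - z - k)
    intro hc; apply h; push_cast; rw [hydef] at hc; linarith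
  have step1 : ∀ i ∈ range j, (((j-1).choose i : ℕ) : ℝ) * stmt10asc (1-2*d) i
        * Real.Gamma ((z:ℝ) - 1 + d - i)
      = (((n).choose i : ℕ) : ℝ) * stmt10asc (1-2*d) i * stmt10asc y (n-i) * Real.Gamma y := by
    intro i hi
    have hi' : i ≤ n := by have := mem_range.mp hi; omega
    have harg : (z:ℝ) - 1 + d - i = y + ((n - i : ℕ):ℝ) := by
      have hc2 : ((n - i:ℕ):ℝ) = ((n:ℕ):ℝ) - i := Nat.cast_sub hi'
      rw [hc2, hcast, hydef]; ring
    rw [harg, stmt10_gamma_asc y hy (n-i), ← hndef]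
    ring
  rw [Finset.sum_congr rfl step1]
  have hsum : ∑ i ∈ range j, (((n).choose i : ℕ) : ℝ) * stmt10asc (1-2*d) i
        * stmt10asc y (n-i) * Real.Gamma y
      = (∑ i ∈ range (n+1), (((n).choose i : ℕ) : ℝ) * stmt10asc (1-2*d) i
        * stmt10asc y (n-i)) * Real.Gamma y := by
    rw [hn, Finset.sum_mul]
  rw [hsum, stmt10asc_vandermonde]
  have hxy : 1 - 2*d + y = (z:ℝ) - j + 1 - d := by rw [hydef]; ring
  rw [hxy]
  have hx : ∀ k:ℕ, ((z:ℝ) - j + 1 - d) + k ≠ 0 := by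
    intro k
    have h := stmt10_ne d hd0 hd1 (z - j + 1 + k)
    intro hc; apply h; push_cast; linarith
  have e : Real.Gamma ((z:ℝ) - d)
      = stmt10asc ((z:ℝ) - j + 1 - d) n * Real.Gamma ((z:ℝ) - j + 1 - d) := by
    have h := stmt10_gamma_asc ((z:ℝ) - j + 1 - d) hx n
    rw [← h]
    congr 1
    rw [hcast]; ring
  have hGne : Real.Gamma ((z:ℝ) - j + 1 - d) ≠ 0 := by
    have h := stmt10_gamma_ne d hd0 hd1 (z - j + 1)
    have harg : ((z - j + 1 : ℤ):ℝ) - d = (z:ℝ) - j + 1 - d := by push_cast; ring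
    rw [harg] at h; exact h
  rw [e]
  field_simp

lemma stmt10_tendsto_ratio (c : ℝ) (hc1 : c < 1) (hc0 : ∀ N : ℕ, (N:ℝ) + c ≠ 0) :
    Tendsto (fun N : ℕ => Real.Gamma ((N:ℝ) + c) / Real.Gamma ((N:ℝ) + 1)) atTop (nhds 0) := by
  set w : ℕ → ℝ := fun N => Real.Gamma ((N:ℝ) + c) / Real.Gamma ((N:ℝ) + 1) with hw
  set H : ℕ → ℝ := fun N => ∑ k ∈ range N, (1/(k+1) : ℝ) with hH
  obtain ⟨M, hM⟩ := exists_nat_ge (1 - c)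
  have hrec : ∀ N : ℕ, w (N+1) = w N * ((N+c)/(N+1)) := by
    intro N
    have h1 : ((N+1:ℕ):ℝ) + c = ((N:ℝ) + c) + 1 := by push_cast; ring
    have h2 : ((N+1:ℕ):ℝ) + 1 = ((N:ℝ) + 1) + 1 := by push_cast; ring
    have hN1 : (N:ℝ) + 1 ≠ 0 := by positivity
    rw [hw]
    simp only
    rw [h1, h2, Real.Gamma_add_one (hc0 N), Real.Gamma_add_one hN1]
    have hGN1 : Real.Gamma ((N:ℝ)+1) ≠ 0 := by
      have : (0:ℝ) < (N:ℝ) + 1 := by positivity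
      exact (Real.Gamma_pos_of_pos this).ne'
    field_simp
  have hbound : ∀ N, M ≤ N →
      |w N| ≤ |w M| * Real.exp ((1-c) * H M) * Real.exp (-(1-c) * H N) := by
    intro N hMN
    induction N with
    | zero =>
        have : M = 0 := by omega
        subst this
        rw [mul_assoc, ← Real.exp_add,
          show (1-c) * H 0 + -(1-c) * H 0 = 0 from by ring, Real.exp_zero, mul_one]
    | succ N ih =>
        rcases Nat.lt_or_ge M (N+1) with hlt | hge
        · have hMN' : M ≤ N := by omega
          have ihN := ih hMN'
          have hNc : (1:ℝ) ≤ (N:ℝ) + c := by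
            have : (M:ℝ) ≤ (N:ℝ) := by exact_mod_cast hMN'
            linarith
          have hratio : (0:ℝ) ≤ ((N:ℝ)+c)/((N:ℝ)+1) := by
            apply div_nonneg <;> [linarith; positivity]
          have habs : |w (N+1)| = |w N| * (((N:ℝ)+c)/((N:ℝ)+1)) := by
            rw [hrec N, abs_mul, abs_of_nonneg hratio]
          have hexp : ((N:ℝ)+c)/((N:ℝ)+1) ≤ Real.exp (-(1-c)/((N:ℝ)+1)) := by
            have h := Real.add_one_le_exp (-(1-c)/((N:ℝ)+1))
            have hN1 : (0:ℝ) < (N:ℝ)+1 := by positivity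
            have heq : -(1-c)/((N:ℝ)+1) + 1 = ((N:ℝ)+c)/((N:ℝ)+1) := by
              field_simp
              ring
            linarith [heq ▸ h]
          have hHs : H (N+1) = H N + 1/((N:ℝ)+1) := by
            rw [hH]; exact Finset.sum_range_succ _ N
          calc |w (N+1)| = |w N| * (((N:ℝ)+c)/((N:ℝ)+1)) := habs
            _ ≤ (|w M| * Real.exp ((1-c) * H M) * Real.exp (-(1-c) * H N))
                * Real.exp (-(1-c)/((N:ℝ)+1)) := by
                exact mul_le_mul ihN hexp hratio (by positivity)
            _ = |w M| * Real.exp ((1-c) * H M) * Real.exp (-(1-c) * H (N+1)) := by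
                rw [hHs, mul_assoc, ← Real.exp_add]
                congr 2
                ring
        · have : M = N + 1 := by omega
          subst this
          rw [mul_assoc, ← Real.exp_add,
            show (1-c) * H (N+1) + -(1-c) * H (N+1) = 0 from by ring, Real.exp_zero, mul_one]
  have hHtop : Tendsto H atTop atTop := Real.tendsto_sum_range_one_div_nat_succ_atTop
  have hc' : (0:ℝ) < 1 - c := by linarith
  have hexp0 : Tendsto (fun N => Real.exp (-(1-c) * H N)) atTop (nhds 0) := by
    have h1 : Tendsto (fun N => (1-c) * H N) atTop atTop := hHtop.const_mul_atTop hc'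
    have h2 : Tendsto (fun N => -((1-c) * H N)) atTop atBot := tendsto_neg_atTop_atBot.comp h1
    have h3 := Real.tendsto_exp_atBot.comp h2
    refine h3.congr (fun N => ?_)
    simp only [Function.comp]
    ring_nf
  have hg0 : Tendsto (fun N => |w M| * Real.exp ((1-c) * H M) * Real.exp (-(1-c) * H N))
      atTop (nhds 0) := by
    have := hexp0.const_mul (|w M| * Real.exp ((1-c) * H M))
    simpa using this
  have habs0 : Tendsto (fun N => |w N|) atTop (nhds 0) := by
    apply squeeze_zero' (Filter.Eventually.of_forall (fun N => abs_nonneg _)) _ hg0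
    exact Filter.eventually_atTop.2 ⟨M, hbound⟩
  rw [hw]
  exact (tendsto_zero_iff_abs_tendsto_zero _).2 habs0

end Stmt10Aux

section Stmt10Main

open Finset Filter

set_option maxHeartbeats 1000000 in
/-- For F(d) with `0 < d < 1/2`, `σε² > 0`, AR coefficients `a 0 = 1`,
`a l = Γ(l-d)/(Γ(l+1)Γ(-d))` for `l ≥ 1`, and autocovariance
`σ m = σε² Γ(1-2d) Γ(|m|+d)/(Γ(d)Γ(1-d)Γ(|m|+1-d))`, for every `j ≥ 1` the series
`∑_{l=0}^∞ a l σ (l - j)` converges absolutely and equals `0`. -/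
theorem stmt_10 (d σε2 : ℝ) (hd0 : 0 < d) (hd2 : d < 1 / 2) (hσε2 : 0 < σε2)
    (a : ℕ → ℝ) (σ : ℤ → ℝ) (ha0 : a 0 = 1)
    (ha : ∀ l : ℕ, 1 ≤ l →
      a l = Real.Gamma ((l : ℝ) - d) / (Real.Gamma ((l : ℝ) + 1) * Real.Gamma (-d)))
    (hσ : ∀ m : ℤ, σ m = σε2 * Real.Gamma (1 - 2 * d) * Real.Gamma ((|m| : ℤ) + d) /
      (Real.Gamma d * Real.Gamma (1 - d) * Real.Gamma ((|m| : ℤ) + 1 - d))) :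
    ∀ j : ℕ, 1 ≤ j →
      (Summable fun l : ℕ => |a l * σ ((l : ℤ) - j)|) ∧
      ∑' l : ℕ, a l * σ ((l : ℤ) - j) = 0 := by
  intro j hj
  have hd1 : d < 1 := by linarith
  have hd1' : (0:ℝ) < 1 - d := by linarith
  have h2d : (0:ℝ) < 1 - 2*d := by linarith
  have hGdpos : 0 < Real.Gamma d := Real.Gamma_pos_of_pos hd0
  have hG1dpos : 0 < Real.Gamma (1-d) := Real.Gamma_pos_of_pos hd1'
  have hG2dpos : 0 < Real.Gamma (1-2*d) := Real.Gamma_pos_of_pos h2d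
  have hGndneg : Real.Gamma (-d) < 0 := by
    have hne : -d ≠ 0 := by intro h; apply hd0.ne'; linarith
    have h1 : Real.Gamma (-d + 1) = -d * Real.Gamma (-d) := Real.Gamma_add_one hne
    have h2 : -d + 1 = 1 - d := by ring
    rw [h2] at h1
    nlinarith [hG1dpos]
  have hGndne : Real.Gamma (-d) ≠ 0 := ne_of_lt hGndneg
  set t : ℕ → ℝ := fun l => a l * σ ((l : ℤ) - j) with htdef
  set K : ℝ := σε2 * Real.Gamma (1-2*d)
      / (Real.Gamma (-d) * Real.Gamma d * Real.Gamma (1-d)) with hKdef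
  set φ : ℕ → ℝ := fun N => ∑ i ∈ range j, (((j-1).choose i : ℕ):ℝ) * stmt10asc (1-2*d) i
      * Real.Gamma ((N:ℝ) + d - i) / ((d - 1 - i) * Real.Gamma ((N:ℝ) + 1)) with hφdef
  have hGl1pos : ∀ l : ℕ, 0 < Real.Gamma ((l:ℝ) + 1) := by
    intro l; apply Real.Gamma_pos_of_pos; positivity
  have hGlj : ∀ l : ℕ, Real.Gamma ((l:ℝ) - j + 1 - d) ≠ 0 := by
    intro l
    have h := stmt10_gamma_ne d hd0 hd1 ((l:ℤ) - j + 1)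
    have harg : (((l:ℤ) - j + 1 : ℤ):ℝ) - d = (l:ℝ) - j + 1 - d := by push_cast; ring
    rw [harg] at h; exact h
  have hdne : ∀ i : ℕ, d - 1 - (i:ℝ) ≠ 0 := by
    intro i
    have h := stmt10_ne d hd0 hd1 ((i:ℤ) + 1)
    intro hc; apply h; push_cast; linarith
  have aform : ∀ l : ℕ,
      a l = Real.Gamma ((l:ℝ) - d) / (Real.Gamma ((l:ℝ) + 1) * Real.Gamma (-d)) := by
    intro l
    rcases Nat.eq_zero_or_pos l with h0 | h1
    · subst h0
      rw [ha0]
      norm_num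
      exact (div_self hGndne).symm
    · exact ha l h1
  have σform : ∀ l : ℕ, σ ((l:ℤ) - j) = σε2 * Real.Gamma (1-2*d)
      * Real.Gamma ((l:ℝ) - j + d) / (Real.Gamma d * Real.Gamma (1-d)
        * Real.Gamma ((l:ℝ) - j + 1 - d)) := by
    intro l
    have hσm := hσ ((l:ℤ) - j)
    rcases le_or_gt (j:ℤ) l with hpos | hneg
    · have habs : |(l:ℤ) - j| = (l:ℤ) - j := abs_of_nonneg (by omega)
      rw [habs] at hσm
      push_cast at hσm
      rw [hσm]
    · have habs : |(l:ℤ) - j| = (j:ℤ) - l := by rw [abs_of_neg (by omega)]; ring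
      rw [habs] at hσm
      push_cast at hσm
      rw [hσm]
      have h := stmt10_reflect d hd0 hd1 (j - l)
      have hlj : l ≤ j := by omega
      have hcn : (((j - l : ℕ)):ℝ) = (j:ℝ) - l := Nat.cast_sub hlj
      rw [hcn] at h
      have harg1 : -((j:ℝ) - l) + d = (l:ℝ) - j + d := by ring
      have harg2 : -((j:ℝ) - l) + 1 - d = (l:ℝ) - j + 1 - d := by ring
      rw [harg1, harg2] at h
      have hz1 : (0:ℝ) < ((j:ℝ) - l) + 1 - d := by
        have h1 : (l:ℝ) + 1 ≤ (j:ℝ) := by exact_mod_cast hneg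
        linarith
      have hne1 : Real.Gamma (((j:ℝ) - l) + 1 - d) ≠ 0 := (Real.Gamma_pos_of_pos hz1).ne'
      have hne2 : Real.Gamma ((l:ℝ) - j + 1 - d) ≠ 0 := hGlj l
      have hcross : Real.Gamma ((j:ℝ) - l + d) * Real.Gamma ((l:ℝ) - j + 1 - d)
          = Real.Gamma ((l:ℝ) - j + d) * Real.Gamma ((j:ℝ) - l + 1 - d) :=
        (div_eq_div_iff hne1 hne2).mp h
      field_simp
      linear_combination hcross
  have tformula : ∀ l : ℕ, t l = K * (Real.Gamma ((l:ℝ) - d) * Real.Gamma ((l:ℝ) - j + d)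
      / (Real.Gamma ((l:ℝ) + 1) * Real.Gamma ((l:ℝ) - j + 1 - d))) := by
    intro l
    have ht : t l = a l * σ ((l:ℤ) - j) := rfl
    rw [ht, aform l, σform l, hKdef]
    ring
  have MAIN : ∀ N : ℕ, ∑ l ∈ range (N+1), t l = K * φ N := by
    intro N
    induction N with
    | zero =>
        rw [Finset.sum_range_one, tformula 0]
        have hφ0 : φ 0 = ∑ i ∈ range j, (((j-1).choose i : ℕ):ℝ) * stmt10asc (1-2*d) i
            * Real.Gamma ((0:ℝ) - 1 + d - i) := by
          rw [hφdef]
          simp only [Nat.cast_zero]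
          apply Finset.sum_congr rfl
          intro i _
          have hrec : Real.Gamma ((0:ℝ) + d - i) = (d - 1 - i) * Real.Gamma (d - 1 - i) := by
            have h := Real.Gamma_add_one (hdne i)
            rw [show (d - 1 - (i:ℝ)) + 1 = (0:ℝ) + d - i from by ring] at h
            exact h
          rw [hrec, show ((0:ℝ)+1) = 1 from by norm_num, Real.Gamma_one,
            show (0:ℝ) - 1 + d - (i:ℝ) = d - 1 - i from by ring]
          field_simp [hdne i]
        rw [hφ0]
        have GL0 := stmt10_GL d hd0 hd2 j hj 0
        push_cast at GL0
        rw [GL0]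
        push_cast
        norm_num
    | succ N ih =>
        rw [Finset.sum_range_succ, ih, tformula (N+1)]
        have hGN : Real.Gamma ((N:ℝ)+1) ≠ 0 := (hGl1pos N).ne'
        have hN1 : ((N:ℝ)+1) ≠ 0 := by positivity
        have hG2 : Real.Gamma (((N+1:ℕ):ℝ) + 1) = ((N:ℝ)+1) * Real.Gamma ((N:ℝ)+1) := by
          have h := Real.Gamma_add_one hN1
          rw [show ((N:ℝ)+1)+1 = (((N+1:ℕ)):ℝ) + 1 from by push_cast; ring] at h
          exact h
        have hterm : ∀ i ∈ range j, (((j-1).choose i : ℕ):ℝ) * stmt10asc (1-2*d) i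
              * Real.Gamma (((N+1:ℕ):ℝ) + d - i) / ((d - 1 - i) * Real.Gamma (((N+1:ℕ):ℝ) + 1))
            = (((j-1).choose i : ℕ):ℝ) * stmt10asc (1-2*d) i
              * Real.Gamma ((N:ℝ) + d - i) / ((d - 1 - i) * Real.Gamma ((N:ℝ) + 1))
              + (((j-1).choose i : ℕ):ℝ) * stmt10asc (1-2*d) i * Real.Gamma ((N:ℝ) + d - i)
                / (((N:ℝ)+1) * Real.Gamma ((N:ℝ)+1)) := by
          intro i _
          have hNdi : (N:ℝ) + d - i ≠ 0 := by
            have h := stmt10_ne d hd0 hd1 ((i:ℤ) - N)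
            intro hc; apply h; push_cast; linarith
          have hG1 : Real.Gamma (((N+1:ℕ):ℝ) + d - i)
              = ((N:ℝ)+d-i) * Real.Gamma ((N:ℝ)+d-i) := by
            have h := Real.Gamma_add_one hNdi
            rw [show ((N:ℝ)+d-i)+1 = (((N+1:ℕ)):ℝ) + d - i from by push_cast; ring] at h
            exact h
          rw [hG1, hG2]
          field_simp [hdne i]
          ring
        have hφsucc : φ (N+1) = φ N + ∑ i ∈ range j, (((j-1).choose i:ℕ):ℝ)
            * stmt10asc (1-2*d) i
            * Real.Gamma ((N:ℝ) + d - i) / (((N:ℝ)+1) * Real.Gamma ((N:ℝ)+1)) := by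
          rw [hφdef]
          simp only
          rw [Finset.sum_congr rfl hterm, Finset.sum_add_distrib]
        have GLN := stmt10_GL d hd0 hd2 j hj ((N:ℤ)+1)
        push_cast at GLN
        have hsum2 : ∑ i ∈ range j, (((j-1).choose i:ℕ):ℝ) * stmt10asc (1-2*d) i
              * Real.Gamma ((N:ℝ) + d - i) / (((N:ℝ)+1) * Real.Gamma ((N:ℝ)+1))
            = (Real.Gamma ((N:ℝ)+1-d) * Real.Gamma ((N:ℝ)+1-j+d)
                / Real.Gamma ((N:ℝ)+1-j+1-d)) / (((N:ℝ)+1) * Real.Gamma ((N:ℝ)+1)) := by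
          rw [← Finset.sum_div]
          congr 1
          rw [← GLN]
          apply Finset.sum_congr rfl
          intro i _
          congr 1
          ring_nf
        rw [hφsucc, hsum2]
        have hGlj' : Real.Gamma ((N:ℝ)+1-j+1-d) ≠ 0 := by
          have h := hGlj (N+1)
          rw [show (((N+1:ℕ)):ℝ) - j + 1 - d = (N:ℝ)+1-j+1-d from by push_cast; ring] at h
          exact h
        rw [hG2, show (((N+1:ℕ)):ℝ) - d = (N:ℝ)+1-d from by push_cast; ring,
          show (((N+1:ℕ)):ℝ) - j + d = (N:ℝ)+1-j+d from by push_cast; ring,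
          show (((N+1:ℕ)):ℝ) - j + 1 - d = (N:ℝ)+1-j+1-d from by push_cast; ring]
        field_simp
  -- limit of φ
  have hφ0 : Tendsto φ atTop (nhds 0) := by
    have h : Tendsto (fun N : ℕ => ∑ i ∈ range j, (((j-1).choose i : ℕ):ℝ)
        * stmt10asc (1-2*d) i / (d - 1 - i)
        * (Real.Gamma ((N:ℝ) + (d - i)) / Real.Gamma ((N:ℝ) + 1))) atTop (nhds 0) := by
      have h0 : (0:ℝ) = ∑ i ∈ range j, (((j-1).choose i : ℕ):ℝ)
          * stmt10asc (1-2*d) i / (d - 1 - i) * 0 := by simp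
      rw [h0]
      apply tendsto_finset_sum
      intro i _
      have hc1 : d - (i:ℝ) < 1 := by
        have : (0:ℝ) ≤ (i:ℝ) := Nat.cast_nonneg i
        linarith
      have hc0 : ∀ N : ℕ, (N:ℝ) + (d - i) ≠ 0 := by
        intro N
        have h := stmt10_ne d hd0 hd1 ((i:ℤ) - N)
        intro hc; apply h; push_cast; linarith
      exact (stmt10_tendsto_ratio (d - i) hc1 hc0).const_mul _
    apply h.congr
    intro N
    rw [hφdef]
    apply Finset.sum_congr rfl
    intro i _
    rw [show (N:ℝ) + (d - i) = (N:ℝ) + d - i from by ring]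
    field_simp
  have hpart1 : Tendsto (fun N : ℕ => ∑ l ∈ range (N+1), t l) atTop (nhds 0) := by
    have h := hφ0.const_mul K
    simp only [mul_zero] at h
    exact h.congr (fun N => (MAIN N).symm)
  have hpartial : Tendsto (fun n : ℕ => ∑ l ∈ range n, t l) atTop (nhds 0) :=
    (tendsto_add_atTop_iff_nat 1).mp hpart1
  -- signs
  have hσpos : ∀ m : ℤ, 0 < σ m := by
    intro m
    rw [hσ m]
    have h0 : (0:ℝ) ≤ ((|m|:ℤ):ℝ) := by positivity
    have h1 : 0 < Real.Gamma (((|m|:ℤ):ℝ) + d) := Real.Gamma_pos_of_pos (by linarith)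
    have h2 : 0 < Real.Gamma (((|m|:ℤ):ℝ) + 1 - d) := Real.Gamma_pos_of_pos (by linarith)
    positivity
  have htneg : ∀ l : ℕ, t (l+1) ≤ 0 := by
    intro l
    have ht : t (l+1) = a (l+1) * σ (((l+1:ℕ):ℤ) - j) := rfl
    have haneg : a (l+1) < 0 := by
      rw [ha (l+1) (by omega)]
      have h1 : 0 < Real.Gamma (((l+1:ℕ):ℝ) - d) := by
        apply Real.Gamma_pos_of_pos
        push_cast
        linarith [Nat.cast_nonneg (α := ℝ) l]
      have h2 : 0 < Real.Gamma (((l+1:ℕ):ℝ) + 1) := hGl1pos (l+1)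
      apply div_neg_of_pos_of_neg h1
      exact mul_neg_of_pos_of_neg h2 hGndneg
    rw [ht]
    exact le_of_lt (mul_neg_of_neg_of_pos haneg (hσpos _))
  -- summability
  have hgt : Tendsto (fun n : ℕ => ∑ l ∈ range n, -t (l+1)) atTop (nhds (t 0)) := by
    have heq : ∀ n : ℕ, ∑ l ∈ range n, -t (l+1) = t 0 - ∑ l ∈ range (n+1), t l := by
      intro n
      rw [Finset.sum_range_succ' t n]
      simp [Finset.sum_neg_distrib]
    have h : Tendsto (fun n : ℕ => t 0 - ∑ l ∈ range (n+1), t l) atTop (nhds (t 0)) := by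
      have h2 : Tendsto (fun n : ℕ => t 0 - ∑ l ∈ range (n+1), t l) atTop
          (nhds (t 0 - 0)) := Filter.Tendsto.sub tendsto_const_nhds hpart1
      simpa using h2
    exact h.congr (fun n => (heq n).symm)
  obtain ⟨b, hb⟩ := hgt.bddAbove_range
  have hsumg : Summable (fun l : ℕ => -t (l+1)) := by
    apply summable_of_sum_range_le (c := b)
    · intro l; linarith [htneg l]
    · intro n; exact hb ⟨n, rfl⟩
  have habs1 : Summable (fun l : ℕ => |t (l+1)|) := by
    apply hsumg.congr
    intro l
    rw [abs_of_nonpos (htneg l)]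
  have hsummable : Summable (fun l : ℕ => |t l|) := (summable_nat_add_iff 1).mp habs1
  have hts : Summable t := hsummable.of_abs
  constructor
  · exact hsummable
  · have h1 := hts.hasSum.tendsto_sum_nat
    exact tendsto_nhds_unique h1 hpartial

end Stmt10Main
end

section
/- For 0 < d < 1/2, let a_j = Γ(j−d)/(Γ(j+1)Γ(−d)) for j ≥ 1, and for integers 1 ≤ j ≤ k define the k-th order Yule–Walker coefficient a_{j,k} = Γ(k+1) Γ(j−d) Γ(k−d−j+1) / (Γ(k−j+1) Γ(j+1) Γ(−d) Γ(k−d+1)). Then a_j − a_{j,k} = −a_j · ( ∏_{m=0}^{j−1} (k−m)/(k−d−m) − 1 ), and consequently a_j − a_{j,k} > 0 for all 1 ≤ j ≤ k. -/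
open Real Finset

lemma gamma_add_nat (x : ℝ) (hx : 0 < x) (n : ℕ) :
    Real.Gamma (x + n) = (∏ m ∈ Finset.range n, (x + m)) * Real.Gamma x := by
  induction n with
  | zero => simp
  | succ n ih =>
      have hne : x + (n : ℝ) ≠ 0 := by positivity
      have : Real.Gamma (x + (n + 1 : ℕ)) = (x + n) * Real.Gamma (x + n) := by
        rw [show x + ((n : ℕ) + 1 : ℕ) = (x + n) + 1 by push_cast; ring,
          Real.Gamma_add_one hne]
      rw [this, ih, Finset.prod_range_succ]; ring

/-- For `0 < d < 1/2`, with `a j = Γ(j-d)/(Γ(j+1)Γ(-d))` and the k-th order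
Yule–Walker coefficients `a_{j,k} = Γ(k+1)Γ(j-d)Γ(k-d-j+1)/(Γ(k-j+1)Γ(j+1)Γ(-d)Γ(k-d+1))`,
for `1 ≤ j ≤ k` we have
`a j - a_{j,k} = -a j * (∏_{m=0}^{j-1} (k-m)/(k-d-m) - 1)`, hence `a j - a_{j,k} > 0`. -/
theorem stmt_11 (d : ℝ) (hd0 : 0 < d) (hd2 : d < 1 / 2)
    (a : ℕ → ℝ) (ak : ℕ → ℕ → ℝ)
    (ha : ∀ j : ℕ, 1 ≤ j →
      a j = Real.Gamma ((j : ℝ) - d) / (Real.Gamma ((j : ℝ) + 1) * Real.Gamma (-d)))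
    (hak : ∀ k j : ℕ, 1 ≤ j → j ≤ k →
      ak j k = Real.Gamma ((k : ℝ) + 1) * Real.Gamma ((j : ℝ) - d) *
          Real.Gamma ((k : ℝ) - d - j + 1) /
        (Real.Gamma ((k : ℝ) - j + 1) * Real.Gamma ((j : ℝ) + 1) * Real.Gamma (-d) *
          Real.Gamma ((k : ℝ) - d + 1))) :
    ∀ k j : ℕ, 1 ≤ j → j ≤ k →
      a j - ak j k =
        -a j * (∏ m ∈ Finset.range j, ((k : ℝ) - m) / ((k : ℝ) - d - m) - 1) ∧
      0 < a j - ak j k := by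
  intro k j hj hjk
  have hd1 : d < 1 := by linarith
  have hjk' : (j : ℝ) ≤ (k : ℝ) := by exact_mod_cast hjk
  -- positivity of various Gamma args
  have hx1 : (0:ℝ) < (k : ℝ) - j + 1 := by linarith
  have hx2 : (0:ℝ) < (k : ℝ) - d - j + 1 := by linarith
  -- Gamma(k+1) = P1 * Gamma(k-j+1)
  have h1 : Real.Gamma ((k : ℝ) + 1) =
      (∏ m ∈ Finset.range j, ((k : ℝ) - j + 1 + m)) * Real.Gamma ((k : ℝ) - j + 1) := by
    have := gamma_add_nat ((k : ℝ) - j + 1) hx1 j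
    rw [show (k : ℝ) - j + 1 + j = (k : ℝ) + 1 by ring] at this
    exact this
  have h2 : Real.Gamma ((k : ℝ) - d + 1) =
      (∏ m ∈ Finset.range j, ((k : ℝ) - d - j + 1 + m)) * Real.Gamma ((k : ℝ) - d - j + 1) := by
    have := gamma_add_nat ((k : ℝ) - d - j + 1) hx2 j
    rw [show (k : ℝ) - d - j + 1 + j = (k : ℝ) - d + 1 by ring] at this
    exact this
  -- reindex products
  have hre1 : (∏ m ∈ Finset.range j, ((k : ℝ) - j + 1 + m)) =
      ∏ m ∈ Finset.range j, ((k : ℝ) - m) := by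
    rw [← Finset.prod_range_reflect (fun m => (k : ℝ) - j + 1 + m) j]
    refine Finset.prod_congr rfl fun m hm => ?_
    have hm' : m + 1 ≤ j := Finset.mem_range.mp hm
    have : ((j - 1 - m : ℕ) : ℝ) = (j : ℝ) - 1 - m := by
      have : m ≤ j - 1 := Nat.le_sub_one_of_lt hm'
      push_cast [Nat.cast_sub (Nat.one_le_of_lt (Nat.lt_of_lt_of_le (Nat.lt_succ_self _) hm')), Nat.cast_sub this]
      ring
    rw [this]; ring
  have hre2 : (∏ m ∈ Finset.range j, ((k : ℝ) - d - j + 1 + m)) =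
      ∏ m ∈ Finset.range j, ((k : ℝ) - d - m) := by
    rw [← Finset.prod_range_reflect (fun m => (k : ℝ) - d - j + 1 + m) j]
    refine Finset.prod_congr rfl fun m hm => ?_
    have hm' : m + 1 ≤ j := Finset.mem_range.mp hm
    have : ((j - 1 - m : ℕ) : ℝ) = (j : ℝ) - 1 - m := by
      have : m ≤ j - 1 := Nat.le_sub_one_of_lt hm'
      push_cast [Nat.cast_sub (Nat.one_le_of_lt (Nat.lt_of_lt_of_le (Nat.lt_succ_self _) hm')), Nat.cast_sub this]
      ring
    rw [this]; ring
  set P1 := ∏ m ∈ Finset.range j, ((k : ℝ) - m) with hP1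
  set P2 := ∏ m ∈ Finset.range j, ((k : ℝ) - d - m) with hP2
  have hG1 : Real.Gamma ((k : ℝ) - j + 1) ≠ 0 := (Real.Gamma_pos_of_pos hx1).ne'
  have hG2 : Real.Gamma ((k : ℝ) - d - j + 1) ≠ 0 := (Real.Gamma_pos_of_pos hx2).ne'
  -- positivity of each P2 factor
  have hfac : ∀ m ∈ Finset.range j, (0:ℝ) < (k : ℝ) - d - m := by
    intro m hm
    have hm' : (m : ℝ) ≤ (j : ℝ) - 1 := by
      have := Finset.mem_range.mp hm
      have : (m : ℝ) + 1 ≤ (j : ℝ) := by exact_mod_cast this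
      linarith
    linarith
  have hP2pos : 0 < P2 := Finset.prod_pos hfac
  -- key product ratio statement
  have hQ : (∏ m ∈ Finset.range j, ((k : ℝ) - m) / ((k : ℝ) - d - m)) = P1 / P2 := by
    rw [hP1, hP2, Finset.prod_div_distrib]
  -- a j < 0
  have hGneg : Real.Gamma (-d) < 0 := by
    have hne : (-d : ℝ) ≠ 0 := by linarith
    have h01 : 0 < -d + 1 := by linarith
    have := Real.Gamma_add_one hne
    have hpos : 0 < Real.Gamma (-d + 1) := Real.Gamma_pos_of_pos h01
    nlinarith [this]
  have hja : (0:ℝ) < (j : ℝ) - d := by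
    have : (1:ℝ) ≤ (j : ℝ) := by exact_mod_cast hj
    linarith
  have haneg : a j < 0 := by
    rw [ha j hj]
    have h1g : 0 < Real.Gamma ((j : ℝ) - d) := Real.Gamma_pos_of_pos hja
    have h2g : 0 < Real.Gamma ((j : ℝ) + 1) := Real.Gamma_pos_of_pos (by positivity)
    exact div_neg_of_pos_of_neg h1g (mul_neg_of_pos_of_neg h2g hGneg)
  have hGj1 : Real.Gamma ((j : ℝ) + 1) ≠ 0 := (Real.Gamma_pos_of_pos (by positivity)).ne'
  have hGnd : Real.Gamma (-d) ≠ 0 := hGneg.ne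
  -- ak = a j * (P1 / P2)
  have hakval : ak j k = a j * (P1 / P2) := by
    rw [hak k j hj hjk, ha j hj, h1, h2, hre1, hre2]
    field_simp
  -- product of ratios > 1
  have hP2lt : P2 < P1 := by
    refine Finset.prod_lt_prod_of_nonempty hfac ?_ ?_
    · intro m hm
      linarith [hfac m hm]
    · exact Finset.nonempty_range_iff.mpr (by omega)
  have hQgt : 1 < ∏ m ∈ Finset.range j, ((k : ℝ) - m) / ((k : ℝ) - d - m) := by
    rw [hQ]
    exact (one_lt_div hP2pos).mpr hP2lt
  have heq : a j - ak j k = -a j * ((∏ m ∈ Finset.range j, ((k : ℝ) - m) / ((k : ℝ) - d - m)) - 1) := by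
    rw [hakval, hQ]; ring
  refine ⟨heq, ?_⟩
  rw [heq]
  have : 0 < -a j := by linarith
  nlinarith [hQgt]
end

section
/- For 0 < d < 1/2, let a_j = Γ(j−d)/(Γ(j+1)Γ(−d)) for j ≥ 1 and a_{j,k} = Γ(k+1) Γ(j−d) Γ(k−d−j+1) / (Γ(k−j+1) Γ(j+1) Γ(−d) Γ(k−d+1)) for 1 ≤ j ≤ k. Then for all 1 ≤ j ≤ k, a_j − a_{j,k} ≤ −a_j · exp( d · Σ_{m=0}^{j−1} 1/(k−d−m) ). -/
open Real Finset

private lemma gamma_shift (x : ℝ) (hx : 0 < x) (j : ℕ) :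
    Real.Gamma (x + j) = (∏ m ∈ Finset.range j, (x + m)) * Real.Gamma x := by
  induction j with
  | zero => simp
  | succ n ih =>
    have h : x + ((n + 1 : ℕ) : ℝ) = (x + n) + 1 := by push_cast; ring
    have hxn : x + (n : ℝ) ≠ 0 := by positivity
    rw [h, Real.Gamma_add_one hxn, ih, Finset.prod_range_succ]
    ring

private lemma prod_reflect (y : ℝ) (j : ℕ) :
    ∏ m ∈ Finset.range j, (y - m) = ∏ m ∈ Finset.range j, (y - j + 1 + m) := by
  rw [← Finset.prod_range_reflect (fun m => y - (j : ℝ) + 1 + m) j]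
  apply Finset.prod_congr rfl
  intro m hm
  have hm' : m < j := Finset.mem_range.mp hm
  have h1 : 1 ≤ j := by omega
  have h2 : m ≤ j - 1 := by omega
  have : ((j - 1 - m : ℕ) : ℝ) = (j : ℝ) - 1 - m := by
    rw [Nat.cast_sub h2, Nat.cast_sub h1]
    push_cast; ring
  rw [this]; ring

/-- For `0 < d < 1/2`, with `a j = Γ(j-d)/(Γ(j+1)Γ(-d))` and the k-th order
Yule–Walker coefficients `a_{j,k}`, for all `1 ≤ j ≤ k`:
`a j - a_{j,k} ≤ -a j * exp (d * ∑_{m=0}^{j-1} 1/(k-d-m))`. -/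
theorem stmt_12 (d : ℝ) (hd0 : 0 < d) (hd2 : d < 1 / 2)
    (a : ℕ → ℝ) (ak : ℕ → ℕ → ℝ)
    (ha : ∀ j : ℕ, 1 ≤ j →
      a j = Real.Gamma ((j : ℝ) - d) / (Real.Gamma ((j : ℝ) + 1) * Real.Gamma (-d)))
    (hak : ∀ k j : ℕ, 1 ≤ j → j ≤ k →
      ak j k = Real.Gamma ((k : ℝ) + 1) * Real.Gamma ((j : ℝ) - d) *
          Real.Gamma ((k : ℝ) - d - j + 1) /
        (Real.Gamma ((k : ℝ) - j + 1) * Real.Gamma ((j : ℝ) + 1) * Real.Gamma (-d) *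
          Real.Gamma ((k : ℝ) - d + 1))) :
    ∀ k j : ℕ, 1 ≤ j → j ≤ k →
      a j - ak j k ≤
        -a j * Real.exp (d * ∑ m ∈ Finset.range j, 1 / ((k : ℝ) - d - m)) := by
  intro k j hj hjk
  have hjR : (1 : ℝ) ≤ (j : ℝ) := by exact_mod_cast hj
  have hjkR : (j : ℝ) ≤ (k : ℝ) := by exact_mod_cast hjk
  -- positivity of denominators
  have hden : ∀ m ∈ Finset.range j, 0 < (k : ℝ) - d - m := by
    intro m hm
    have hm' : m < j := Finset.mem_range.mp hm
    have : (m : ℝ) + 1 ≤ (k : ℝ) := by exact_mod_cast Nat.lt_of_lt_of_le hm' hjk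
    linarith
  -- Gamma facts
  have hGneg : Real.Gamma (-d) < 0 := by
    have h1 : Real.Gamma (-d + 1) = -d * Real.Gamma (-d) :=
      Real.Gamma_add_one (by linarith)
    have h2 : 0 < Real.Gamma (-d + 1) := Real.Gamma_pos_of_pos (by linarith)
    nlinarith
  have hGjd : 0 < Real.Gamma ((j : ℝ) - d) := Real.Gamma_pos_of_pos (by linarith)
  have hGj1 : 0 < Real.Gamma ((j : ℝ) + 1) := Real.Gamma_pos_of_pos (by linarith)
  have hGkj : 0 < Real.Gamma ((k : ℝ) - j + 1) := Real.Gamma_pos_of_pos (by linarith)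
  have hGkdj : 0 < Real.Gamma ((k : ℝ) - d - j + 1) := Real.Gamma_pos_of_pos (by linarith)
  have haneg : a j < 0 := by
    rw [ha j hj]
    exact div_neg_of_pos_of_neg hGjd (mul_neg_of_pos_of_neg hGj1 hGneg)
  -- product formulas
  have hQ1 : Real.Gamma ((k : ℝ) + 1)
      = (∏ m ∈ Finset.range j, ((k : ℝ) - m)) * Real.Gamma ((k : ℝ) - j + 1) := by
    have := gamma_shift ((k : ℝ) - j + 1) (by linarith) j
    rw [show ((k : ℝ) - j + 1) + (j : ℝ) = (k : ℝ) + 1 by ring] at this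
    rw [this, prod_reflect ((k : ℝ)) j]
  have hQ2 : Real.Gamma ((k : ℝ) - d + 1)
      = (∏ m ∈ Finset.range j, ((k : ℝ) - d - m)) * Real.Gamma ((k : ℝ) - d - j + 1) := by
    have := gamma_shift ((k : ℝ) - d - j + 1) (by linarith) j
    rw [show ((k : ℝ) - d - j + 1) + (j : ℝ) = (k : ℝ) - d + 1 by ring] at this
    rw [this, prod_reflect ((k : ℝ) - d) j]
  set P : ℝ := ∏ m ∈ Finset.range j, (((k : ℝ) - m) / ((k : ℝ) - d - m)) with hPdef
  have hprodpos : 0 < ∏ m ∈ Finset.range j, ((k : ℝ) - d - m) := Finset.prod_pos hden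
  have hak' : ak j k = a j * P := by
    have n1 := hGkj.ne'
    have n2 := hGkdj.ne'
    have n3 := hGj1.ne'
    have n4 := hGneg.ne
    have n5 := hprodpos.ne'
    rw [hak k j hj hjk, ha j hj, hPdef, Finset.prod_div_distrib, hQ1, hQ2]
    field_simp
  -- the exponential bound
  have hPle : P ≤ Real.exp (d * ∑ m ∈ Finset.range j, 1 / ((k : ℝ) - d - m)) := by
    rw [Finset.mul_sum, Real.exp_sum]
    apply Finset.prod_le_prod
    · intro m hm
      have := hden m hm
      have hnum : 0 < (k : ℝ) - m := by linarith
      positivity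
    · intro m hm
      have h := hden m hm
      have key : ((k : ℝ) - m) / ((k : ℝ) - d - m) = d * (1 / ((k : ℝ) - d - m)) + 1 := by
        field_simp
        ring
      rw [key]
      exact Real.add_one_le_exp _
  have heq : a j - ak j k = -a j * (P - 1) := by rw [hak']; ring
  rw [heq]
  have hna : 0 ≤ -a j := by linarith
  have : P - 1 ≤ Real.exp (d * ∑ m ∈ Finset.range j, 1 / ((k : ℝ) - d - m)) := by
    linarith
  exact mul_le_mul_of_nonneg_left this hna
end

section
/- Let (σ(m))_{m∈ℤ} be a real even sequence (σ(−m) = σ(m)) and (a_j)_{j≥0} a real sequence with a_0 = 1 such that Σ_{l≥0} |a_l| |σ(l−j)| < ∞ for all j and the double series below converge absolutely. Fix k ≥ 1 and let (a_{j,k})_{0≤j≤k} be reals with a_{0,k} = 1 satisfying the Yule–Walker equations Σ_{i=1}^k a_{i,k} σ(i−j) = σ(j) for all 1 ≤ j ≤ k (here a_{j,k} enters the error formula with the AR sign convention, and we set a_{j,k} = 0 for j > k); assume moreover Σ_{l=0}^∞ a_l σ(l−j) = 0 for every j ≥ 1. Then Σ_{j=0}^∞ Σ_{l=0}^∞ (a_j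 a_l − a_{j,k} a_{l,k}) σ(j−l) = Σ_{j=1}^k Σ_{l=1}^k (a_{j,k} − a_j)(a_l − a_{l,k}) σ(j−l) + 2 Σ_{j=1}^k (a_{j,k} − a_j) Σ_{l=k+1}^∞ a_l σ(j−l) − Σ_{j=k+1}^∞ Σ_{l=k+1}^∞ a_j a_l σ(j−l). -/
open Finset

set_option maxHeartbeats 1000000

/-- Error-decomposition identity. If `σ` is even, `a 0 = 1`,
`∑_l |a l||σ(l-j)| < ∞` for all `j`, the double series involved converge absolutely,
`(a_{j,k})` satisfies `a_{0,k} = 1`, `a_{j,k} = 0` for `j > k`, the Yule–Walker equations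
`∑_{i=1}^k a_{i,k} σ(i-j) = σ(j)` for `1 ≤ j ≤ k`, and the orthogonality relations
`∑_{l=0}^∞ a_l σ(l-j) = 0` for `j ≥ 1`, then
`∑_{j,l≥0} (a_j a_l - a_{j,k} a_{l,k}) σ(j-l)
  = ∑_{j,l=1}^k (a_{j,k}-a_j)(a_l-a_{l,k}) σ(j-l)
    + 2 ∑_{j=1}^k (a_{j,k}-a_j) ∑_{l>k} a_l σ(j-l)
    - ∑_{j,l>k} a_j a_l σ(j-l)`. -/
theorem stmt_13 (σ : ℤ → ℝ) (a ak : ℕ → ℝ) (k : ℕ) (hk : 1 ≤ k)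
    (hσeven : ∀ m : ℤ, σ (-m) = σ m)
    (ha0 : a 0 = 1) (hak0 : ak 0 = 1) (hakzero : ∀ j : ℕ, k < j → ak j = 0)
    (hsum : ∀ j : ℤ, Summable fun l : ℕ => |a l| * |σ ((l : ℤ) - j)|)
    (hsumLHS : Summable fun p : ℕ × ℕ =>
      |(a p.1 * a p.2 - ak p.1 * ak p.2) * σ ((p.1 : ℤ) - p.2)|)
    (hsumTail : Summable fun p : ℕ × ℕ =>
      |a (k + 1 + p.1) * a (k + 1 + p.2) * σ ((p.1 : ℤ) - p.2)|)
    (hYW : ∀ j : ℕ, 1 ≤ j → j ≤ k →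
      ∑ i ∈ Finset.Icc 1 k, ak i * σ ((i : ℤ) - j) = σ j)
    (horth : ∀ j : ℕ, 1 ≤ j → ∑' l : ℕ, a l * σ ((l : ℤ) - j) = 0) :
    ∑' j : ℕ, ∑' l : ℕ, (a j * a l - ak j * ak l) * σ ((j : ℤ) - l)
      = (∑ j ∈ Finset.Icc 1 k, ∑ l ∈ Finset.Icc 1 k,
          (ak j - a j) * (a l - ak l) * σ ((j : ℤ) - l))
        + 2 * ∑ j ∈ Finset.Icc 1 k, (ak j - a j) *
            ∑' l : ℕ, a (k + 1 + l) * σ ((j : ℤ) - (k + 1 + l))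
        - ∑' j : ℕ, ∑' l : ℕ,
            a (k + 1 + j) * a (k + 1 + l) * σ ((j : ℤ) - l) := by
  -- ΣEVEN in subtraction form
  have hσ' : ∀ x y : ℤ, σ (x - y) = σ (y - x) := by
    intro x y
    rw [← hσeven (y - x)]
    congr 1
    ring
  -- summability of l ↦ a l * σ (l - c)
  have hsA : ∀ c : ℤ, Summable fun l : ℕ => a l * σ ((l : ℤ) - c) := by
    intro c
    exact summable_abs_iff.mp ((hsum c).congr fun l => (abs_mul _ _).symm)
  have hsA' : ∀ c : ℤ, Summable fun l : ℕ => a l * σ (c - (l : ℤ)) := by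
    intro c
    exact (hsA c).congr fun l => by rw [hσ']
  -- tail summability, statement form
  have hsU : ∀ j : ℕ, Summable fun m : ℕ => a (k + 1 + m) * σ ((j : ℤ) - (k + 1 + m)) := by
    intro j
    have h1 : Summable fun m : ℕ => a (m + (k + 1)) * σ ((j : ℤ) - ((m + (k + 1) : ℕ) : ℤ)) :=
      (summable_nat_add_iff (f := fun l : ℕ => a l * σ ((j : ℤ) - (l : ℤ))) (k + 1)).mpr
        (hsA' (j : ℤ))
    refine h1.congr fun m => ?_
    have h2 : a (m + (k + 1)) = a (k + 1 + m) := by rw [add_comm]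
    have h3 : (j : ℤ) - ((m + (k + 1) : ℕ) : ℤ) = (j : ℤ) - ((k : ℤ) + 1 + m) := by
      push_cast; ring
    rw [h2, h3]
  -- orthogonality split at k+1
  have horthSplit : ∀ j : ℕ, 1 ≤ j →
      (∑' m : ℕ, a (k + 1 + m) * σ ((j : ℤ) - (k + 1 + m)))
        = -∑ l ∈ Finset.range (k + 1), a l * σ ((l : ℤ) - j) := by
    intro j hj
    have hs := hsA (j : ℤ)
    have hsplit := Summable.sum_add_tsum_nat_add (f := fun l : ℕ => a l * σ ((l : ℤ) - j)) (k + 1) hs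
    rw [horth j hj] at hsplit
    have htail : (∑' m : ℕ, a (m + (k + 1)) * σ (((m + (k + 1) : ℕ) : ℤ) - j))
        = ∑' m : ℕ, a (k + 1 + m) * σ ((j : ℤ) - (k + 1 + m)) := by
      refine tsum_congr fun m => ?_
      have h2 : a (m + (k + 1)) = a (k + 1 + m) := by rw [add_comm]
      have h3 : ((m + (k + 1) : ℕ) : ℤ) - j = -((j : ℤ) - ((k : ℤ) + 1 + m)) := by
        push_cast; ring
      rw [h2, h3, hσeven]
    rw [htail] at hsplit
    linarith [hsplit]
  -- product summabilities
  have sQ : Summable fun p : ℕ × ℕ => ak p.1 * ak p.2 * σ ((p.1 : ℤ) - p.2) := by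
    apply summable_of_ne_finset_zero (s := Finset.range (k + 1) ×ˢ Finset.range (k + 1))
    intro p hp
    simp only [Finset.mem_product, Finset.mem_range, not_and_or, not_lt] at hp
    rcases hp with h | h
    · rw [hakzero p.1 (by omega)]; ring
    · rw [hakzero p.2 (by omega)]; ring
  have sF : Summable fun p : ℕ × ℕ => (a p.1 * a p.2 - ak p.1 * ak p.2) * σ ((p.1 : ℤ) - p.2) :=
    summable_abs_iff.mp hsumLHS
  have sP : Summable fun p : ℕ × ℕ => a p.1 * a p.2 * σ ((p.1 : ℤ) - p.2) := by
    refine (sF.add sQ).congr fun p => ?_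
    ring
  have sP'abs : Summable fun q : ℕ × ℕ => |a q.2 * ak q.1 * σ ((q.2 : ℤ) - q.1)| := by
    rw [summable_prod_of_nonneg (fun q => abs_nonneg _)]
    constructor
    · intro l
      refine (((hsum (l : ℤ)).mul_left |ak l|)).congr fun j => ?_
      rw [abs_mul, abs_mul]
      ring
    · apply summable_of_ne_finset_zero (s := Finset.range (k + 1))
      intro l hl
      have hz : ak l = 0 := hakzero l (by simp only [Finset.mem_range, not_lt] at hl; omega)
      have : ∀ j : ℕ, |a j * ak l * σ ((j : ℤ) - l)| = 0 := by
        intro j; rw [hz]; simp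
      simp [this]
  have sP' : Summable fun p : ℕ × ℕ => a p.1 * ak p.2 * σ ((p.1 : ℤ) - p.2) := by
    apply summable_abs_iff.mp
    have h := (Equiv.prodComm ℕ ℕ).summable_iff
      (f := fun p : ℕ × ℕ => |a p.1 * ak p.2 * σ ((p.1 : ℤ) - p.2)|)
    exact h.mp (sP'abs.congr fun q => rfl)
  have sG : Summable fun p : ℕ × ℕ => a p.1 * (a p.2 - ak p.2) * σ ((p.1 : ℤ) - p.2) := by
    refine (sP.sub sP').congr fun p => ?_
    ring
  have sH : Summable fun p : ℕ × ℕ => (a p.1 - ak p.1) * ak p.2 * σ ((p.1 : ℤ) - p.2) := by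
    refine (sP'.sub sQ).congr fun p => ?_
    ring
  -- the G-part vanishes
  have tsumG : (∑' p : ℕ × ℕ, a p.1 * (a p.2 - ak p.2) * σ ((p.1 : ℤ) - p.2)) = 0 := by
    have h1 : (∑' p : ℕ × ℕ, a p.1 * (a p.2 - ak p.2) * σ ((p.1 : ℤ) - p.2))
        = ∑' q : ℕ × ℕ, a q.2 * (a q.1 - ak q.1) * σ ((q.2 : ℤ) - q.1) :=
      ((Equiv.prodComm ℕ ℕ).tsum_eq
        (fun p : ℕ × ℕ => a p.1 * (a p.2 - ak p.2) * σ ((p.1 : ℤ) - p.2))).symm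
    rw [h1]
    have sG' : Summable fun q : ℕ × ℕ => a q.2 * (a q.1 - ak q.1) * σ ((q.2 : ℤ) - q.1) := by
      have h := (Equiv.prodComm ℕ ℕ).summable_iff
        (f := fun p : ℕ × ℕ => a p.1 * (a p.2 - ak p.2) * σ ((p.1 : ℤ) - p.2))
      exact (h.mpr sG).congr fun q => rfl
    rw [Summable.tsum_prod sG']
    have hzero : ∀ l : ℕ, (∑' j : ℕ, a j * (a l - ak l) * σ ((j : ℤ) - l)) = 0 := by
      intro l
      have h2 : (∑' j : ℕ, a j * (a l - ak l) * σ ((j : ℤ) - l))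
          = (a l - ak l) * ∑' j : ℕ, a j * σ ((j : ℤ) - l) := by
        rw [← tsum_mul_left]
        exact tsum_congr fun j => by ring
      rw [h2]
      rcases Nat.eq_zero_or_pos l with h | h
      · subst h; rw [ha0, hak0]; ring
      · rw [horth l h, mul_zero]
    calc (∑' (q1 : ℕ) (q2 : ℕ), a q2 * (a q1 - ak q1) * σ ((q2 : ℤ) - q1))
        = ∑' _ : ℕ, (0 : ℝ) := tsum_congr fun l => hzero l
      _ = 0 := tsum_zero
  -- the H-part
  have tsumH : (∑' p : ℕ × ℕ, (a p.1 - ak p.1) * ak p.2 * σ ((p.1 : ℤ) - p.2))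
      = ∑' j : ℕ, (a j - ak j) * ∑ l ∈ Finset.range (k + 1), ak l * σ ((j : ℤ) - l) := by
    rw [Summable.tsum_prod sH]
    refine tsum_congr fun j => ?_
    have h1 : (∑' l : ℕ, (a j - ak j) * ak l * σ ((j : ℤ) - l))
        = (a j - ak j) * ∑' l : ℕ, ak l * σ ((j : ℤ) - l) := by
      rw [← tsum_mul_left]
      exact tsum_congr fun l => by ring
    have h2 : (∑' l : ℕ, ak l * σ ((j : ℤ) - l))
        = ∑ l ∈ Finset.range (k + 1), ak l * σ ((j : ℤ) - l) := by
      refine tsum_eq_sum fun l hl => ?_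
      rw [hakzero l (by simp only [Finset.mem_range, not_lt] at hl; omega)]
      ring
    calc (∑' l : ℕ, (a j - ak j) * ak l * σ ((j : ℤ) - l))
        = (a j - ak j) * ∑' l : ℕ, ak l * σ ((j : ℤ) - l) := h1
      _ = (a j - ak j) * ∑ l ∈ Finset.range (k + 1), ak l * σ ((j : ℤ) - l) := by rw [h2]
  -- LHS as a single series
  have hLHS1 : (∑' j : ℕ, ∑' l : ℕ, (a j * a l - ak j * ak l) * σ ((j : ℤ) - l))
      = ∑' j : ℕ, (a j - ak j) * ∑ l ∈ Finset.range (k + 1), ak l * σ ((j : ℤ) - l) := by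
    have h0 : (∑' j : ℕ, ∑' l : ℕ, (a j * a l - ak j * ak l) * σ ((j : ℤ) - l))
        = ∑' p : ℕ × ℕ, (a p.1 * a p.2 - ak p.1 * ak p.2) * σ ((p.1 : ℤ) - p.2) :=
      (Summable.tsum_prod sF).symm
    have hsplit : (∑' p : ℕ × ℕ, (a p.1 * a p.2 - ak p.1 * ak p.2) * σ ((p.1 : ℤ) - p.2))
        = (∑' p : ℕ × ℕ, a p.1 * (a p.2 - ak p.2) * σ ((p.1 : ℤ) - p.2))
          + ∑' p : ℕ × ℕ, (a p.1 - ak p.1) * ak p.2 * σ ((p.1 : ℤ) - p.2) := by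
      rw [← Summable.tsum_add sG sH]
      exact tsum_congr fun p => by ring
    rw [h0, hsplit, tsumG, tsumH, zero_add]
  -- summability of the j-series
  have sφ : Summable fun j : ℕ => (a j - ak j) * ∑ l ∈ Finset.range (k + 1), ak l * σ ((j : ℤ) - l) := by
    have h1 : ∀ l ∈ Finset.range (k + 1),
        Summable fun j : ℕ => (a j - ak j) * (ak l * σ ((j : ℤ) - l)) := by
      intro l _
      have hA : Summable fun j : ℕ => a j * (ak l * σ ((j : ℤ) - l)) := by
        refine ((hsA (l : ℤ)).mul_right (ak l)).congr fun j => ?_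
        ring
      have hB : Summable fun j : ℕ => ak j * (ak l * σ ((j : ℤ) - l)) := by
        apply summable_of_ne_finset_zero (s := Finset.range (k + 1))
        intro j hj
        rw [hakzero j (by simp only [Finset.mem_range, not_lt] at hj; omega)]
        ring
      refine (hA.sub hB).congr fun j => ?_
      ring
    refine (summable_sum h1).congr fun j => ?_
    rw [Finset.mul_sum]
  -- split the j-series at k+1
  have hsplitφ := Summable.sum_add_tsum_nat_add
    (f := fun j : ℕ => (a j - ak j) * ∑ l ∈ Finset.range (k + 1), ak l * σ ((j : ℤ) - l))
    (k + 1) sφ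
  -- range (k+1) sums split off the 0 term
  have hsum01 : ∀ f : ℕ → ℝ, ∑ i ∈ Finset.range (k + 1), f i = f 0 + ∑ i ∈ Finset.Icc 1 k, f i := by
    intro f
    have hins : Finset.range (k + 1) = insert 0 (Finset.Icc 1 k) := by
      ext x
      simp only [Finset.mem_range, Finset.mem_insert, Finset.mem_Icc]
      omega
    rw [hins, Finset.sum_insert (by simp)]
  -- tail of the j-series
  have hφtail : (∑' m : ℕ, (a (m + (k + 1)) - ak (m + (k + 1)))
        * ∑ l ∈ Finset.range (k + 1), ak l * σ (((m + (k + 1) : ℕ) : ℤ) - l))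
      = ∑ l ∈ Finset.range (k + 1), ak l * ∑' m : ℕ, a (k + 1 + m) * σ ((l : ℤ) - (k + 1 + m)) := by
    have h1 : ∀ m : ℕ, (a (m + (k + 1)) - ak (m + (k + 1)))
          * ∑ l ∈ Finset.range (k + 1), ak l * σ (((m + (k + 1) : ℕ) : ℤ) - l)
        = ∑ l ∈ Finset.range (k + 1), ak l * (a (k + 1 + m) * σ ((l : ℤ) - ((k : ℤ) + 1 + m))) := by
      intro m
      rw [hakzero (m + (k + 1)) (by omega), sub_zero, add_comm m (k + 1), Finset.mul_sum]
      refine Finset.sum_congr rfl fun l _ => ?_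
      have h2 : σ (((k + 1 + m : ℕ) : ℤ) - l) = σ ((l : ℤ) - ((k : ℤ) + 1 + m)) := by
        rw [hσ']
        have hc : ((k + 1 + m : ℕ) : ℤ) = (k : ℤ) + 1 + m := by push_cast; ring
        rw [hc]
      rw [h2]
      ring
    rw [tsum_congr h1]
    rw [Summable.tsum_finsetSum (fun l _ => ((hsU l).mul_left (ak l)))]
    exact Finset.sum_congr rfl fun l _ => by rw [tsum_mul_left]
  -- R3 inner sum via orthogonality
  have hinner : ∀ m : ℕ, (∑' n : ℕ, a (k + 1 + n) * σ ((m : ℤ) - n))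
      = -∑ l ∈ Finset.range (k + 1), a l * σ ((l : ℤ) - ((k : ℤ) + 1 + m)) := by
    intro m
    have h := horthSplit (k + 1 + m) (by omega)
    have h1 : (∑' n : ℕ, a (k + 1 + n) * σ (((k + 1 + m : ℕ) : ℤ) - (k + 1 + n)))
        = ∑' n : ℕ, a (k + 1 + n) * σ ((m : ℤ) - n) := by
      refine tsum_congr fun n => ?_
      have hc : ((k + 1 + m : ℕ) : ℤ) - ((k : ℤ) + 1 + n) = (m : ℤ) - n := by push_cast; ring
      rw [hc]
    have h2 : (∑ l ∈ Finset.range (k + 1), a l * σ ((l : ℤ) - ((k + 1 + m : ℕ) : ℤ)))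
        = ∑ l ∈ Finset.range (k + 1), a l * σ ((l : ℤ) - ((k : ℤ) + 1 + m)) := by
      refine Finset.sum_congr rfl fun l _ => ?_
      have hc : ((k + 1 + m : ℕ) : ℤ) = (k : ℤ) + 1 + m := by push_cast; ring
      rw [hc]
    rw [h1, h2] at h
    exact h
  -- R3 evaluation
  have hR3 : (∑' j : ℕ, ∑' l : ℕ, a (k + 1 + j) * a (k + 1 + l) * σ ((j : ℤ) - l))
      = -∑ l ∈ Finset.range (k + 1), a l * ∑' m : ℕ, a (k + 1 + m) * σ ((l : ℤ) - (k + 1 + m)) := by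
    have h1 : ∀ j : ℕ, (∑' l : ℕ, a (k + 1 + j) * a (k + 1 + l) * σ ((j : ℤ) - l))
        = ∑ l ∈ Finset.range (k + 1), -(a l * (a (k + 1 + j) * σ ((l : ℤ) - ((k : ℤ) + 1 + j)))) := by
      intro j
      have e1 : (∑' l : ℕ, a (k + 1 + j) * a (k + 1 + l) * σ ((j : ℤ) - l))
          = a (k + 1 + j) * ∑' l : ℕ, a (k + 1 + l) * σ ((j : ℤ) - l) := by
        rw [← tsum_mul_left]
        exact tsum_congr fun l => by ring
      rw [e1, hinner j, mul_neg, Finset.mul_sum, ← Finset.sum_neg_distrib]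
      exact Finset.sum_congr rfl fun l _ => by ring
    rw [tsum_congr h1]
    have hsum2 : ∀ l ∈ Finset.range (k + 1),
        Summable fun j : ℕ => -(a l * (a (k + 1 + j) * σ ((l : ℤ) - ((k : ℤ) + 1 + j)))) :=
      fun l _ => (((hsU l).mul_left (a l)).neg)
    rw [Summable.tsum_finsetSum hsum2]
    rw [← Finset.sum_neg_distrib]
    refine Finset.sum_congr rfl fun l _ => ?_
    rw [tsum_neg, tsum_mul_left]
  -- pointwise values on Icc 1 k
  have hTj : ∀ j ∈ Finset.Icc 1 k,
      (∑ l ∈ Finset.range (k + 1), ak l * σ ((j : ℤ) - l)) = 2 * σ (j : ℤ) := by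
    intro j hj
    simp only [Finset.mem_Icc] at hj
    rw [hsum01 (fun l => ak l * σ ((j : ℤ) - l))]
    have h0 : ak 0 * σ ((j : ℤ) - ((0 : ℕ) : ℤ)) = σ (j : ℤ) := by
      rw [hak0]
      norm_num
    have h1 : (∑ l ∈ Finset.Icc 1 k, ak l * σ ((j : ℤ) - l)) = σ (j : ℤ) := by
      have h2 : (∑ l ∈ Finset.Icc 1 k, ak l * σ ((j : ℤ) - l))
          = ∑ l ∈ Finset.Icc 1 k, ak l * σ ((l : ℤ) - j) :=
        Finset.sum_congr rfl fun l _ => by rw [hσ']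
      rw [h2]
      exact hYW j hj.1 hj.2
    rw [h0, h1]
    ring
  have hUj : ∀ j ∈ Finset.Icc 1 k,
      (∑' m : ℕ, a (k + 1 + m) * σ ((j : ℤ) - (k + 1 + m)))
        = -σ (j : ℤ) - ∑ l ∈ Finset.Icc 1 k, a l * σ ((j : ℤ) - l) := by
    intro j hj
    simp only [Finset.mem_Icc] at hj
    rw [horthSplit j hj.1]
    rw [hsum01 (fun l => a l * σ ((l : ℤ) - j))]
    have h0 : a 0 * σ (((0 : ℕ) : ℤ) - j) = σ (j : ℤ) := by
      rw [ha0]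
      have : ((0 : ℕ) : ℤ) - j = -(j : ℤ) := by push_cast; ring
      rw [this, hσeven]
      ring
    have h1 : (∑ l ∈ Finset.Icc 1 k, a l * σ ((l : ℤ) - j))
        = ∑ l ∈ Finset.Icc 1 k, a l * σ ((j : ℤ) - l) :=
      Finset.sum_congr rfl fun l _ => by rw [hσ']
    rw [h0, h1]
    ring
  -- R1 evaluation
  have hR1 : (∑ j ∈ Finset.Icc 1 k, ∑ l ∈ Finset.Icc 1 k,
        (ak j - a j) * (a l - ak l) * σ ((j : ℤ) - l))
      = ∑ j ∈ Finset.Icc 1 k,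
          (ak j - a j) * ((∑ l ∈ Finset.Icc 1 k, a l * σ ((j : ℤ) - l)) - σ (j : ℤ)) := by
    refine Finset.sum_congr rfl fun j hj => ?_
    simp only [Finset.mem_Icc] at hj
    have h1 : (∑ l ∈ Finset.Icc 1 k, (ak j - a j) * (a l - ak l) * σ ((j : ℤ) - l))
        = (ak j - a j) * ∑ l ∈ Finset.Icc 1 k, (a l * σ ((j : ℤ) - l) - ak l * σ ((j : ℤ) - l)) := by
      rw [Finset.mul_sum]
      exact Finset.sum_congr rfl fun l _ => by ring
    rw [h1, Finset.sum_sub_distrib]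
    have h2 : (∑ l ∈ Finset.Icc 1 k, ak l * σ ((j : ℤ) - l)) = σ (j : ℤ) := by
      have h3 : (∑ l ∈ Finset.Icc 1 k, ak l * σ ((j : ℤ) - l))
          = ∑ l ∈ Finset.Icc 1 k, ak l * σ ((l : ℤ) - j) :=
        Finset.sum_congr rfl fun l _ => by rw [hσ']
      rw [h3]
      exact hYW j hj.1 hj.2
    rw [h2]
  -- now assemble everything
  rw [hLHS1, ← hsplitφ]
  rw [hsum01 (fun j => (a j - ak j) * ∑ l ∈ Finset.range (k + 1), ak l * σ ((j : ℤ) - l))]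
  rw [hφtail]
  rw [hsum01 (fun l => ak l * ∑' m : ℕ, a (k + 1 + m) * σ ((l : ℤ) - (k + 1 + m)))]
  rw [hR3]
  rw [hsum01 (fun l => a l * ∑' m : ℕ, a (k + 1 + m) * σ ((l : ℤ) - (k + 1 + m)))]
  rw [hR1]
  have hz0 : (a 0 - ak 0) * ∑ l ∈ Finset.range (k + 1), ak l * σ (((0 : ℕ) : ℤ) - l) = 0 := by
    rw [ha0, hak0]
    ring
  rw [hz0, zero_add, hak0, ha0, one_mul]
  -- replace T and U on Icc sums
  have e1 : (∑ j ∈ Finset.Icc 1 k,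
        (a j - ak j) * ∑ l ∈ Finset.range (k + 1), ak l * σ ((j : ℤ) - l))
      = ∑ j ∈ Finset.Icc 1 k, (a j - ak j) * (2 * σ (j : ℤ)) :=
    Finset.sum_congr rfl fun j hj => by rw [hTj j hj]
  have e2 : (∑ l ∈ Finset.Icc 1 k, ak l * ∑' m : ℕ, a (k + 1 + m) * σ ((l : ℤ) - (k + 1 + m)))
      = ∑ l ∈ Finset.Icc 1 k, ak l * (-σ (l : ℤ) - ∑ i ∈ Finset.Icc 1 k, a i * σ ((l : ℤ) - i)) :=
    Finset.sum_congr rfl fun l hl => by rw [hUj l hl]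
  have e3 : (∑ l ∈ Finset.Icc 1 k, a l * ∑' m : ℕ, a (k + 1 + m) * σ ((l : ℤ) - (k + 1 + m)))
      = ∑ l ∈ Finset.Icc 1 k, a l * (-σ (l : ℤ) - ∑ i ∈ Finset.Icc 1 k, a i * σ ((l : ℤ) - i)) :=
    Finset.sum_congr rfl fun l hl => by rw [hUj l hl]
  have e4 : (∑ j ∈ Finset.Icc 1 k,
        (ak j - a j) * ∑' l : ℕ, a (k + 1 + l) * σ ((j : ℤ) - (k + 1 + l)))
      = ∑ j ∈ Finset.Icc 1 k,
          (ak j - a j) * (-σ (j : ℤ) - ∑ i ∈ Finset.Icc 1 k, a i * σ ((j : ℤ) - i)) :=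
    Finset.sum_congr rfl fun j hj => by rw [hUj j hj]
  rw [e1, e2, e3, e4]
  -- final finite-sum algebra
  have hfin : (∑ j ∈ Finset.Icc 1 k, ((a j - ak j) * (2 * σ (j : ℤ))
        + ak j * (-σ (j : ℤ) - ∑ i ∈ Finset.Icc 1 k, a i * σ ((j : ℤ) - i))))
      = ∑ j ∈ Finset.Icc 1 k,
          ((ak j - a j) * ((∑ i ∈ Finset.Icc 1 k, a i * σ ((j : ℤ) - i)) - σ (j : ℤ))
            + (2 * ((ak j - a j) * (-σ (j : ℤ) - ∑ i ∈ Finset.Icc 1 k, a i * σ ((j : ℤ) - i)))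
              + a j * (-σ (j : ℤ) - ∑ i ∈ Finset.Icc 1 k, a i * σ ((j : ℤ) - i)))) :=
    Finset.sum_congr rfl fun j _ => by ring
  rw [Finset.sum_add_distrib, Finset.sum_add_distrib, Finset.sum_add_distrib,
    ← Finset.mul_sum] at hfin
  linarith [hfin]
end

section
/- Let 0 < d < 1/2 and let (a_j)_{j≥1}, (b_j)_{j≥0} be real sequences such that for every δ > 0 there are constants C₁(δ), C₂(δ) with |a_j| ≤ C₁(δ) j^{−d−1+δ} for j ≥ 1 and |b_j| ≤ C₂(δ) j^{d−1+δ} for j ≥ 1, with b_0 bounded. Then for every δ > 0 there is a constant C(δ) such that for all integers h ≥ 1 and j ≥ 1: |Σ_{m=0}^{h−1} a_{j+h−1−m} b_m| ≤ C(δ) h^{d+2δ} j^{−d−1+δ}. -/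
open Real Finset

/-- Telescoping Bernoulli estimate: `s * ∑_{m<n} (m+1)^(s-1) ≤ n^s` for `0 < s ≤ 1`. -/
lemma aux_sum_rpow (s : ℝ) (hs0 : 0 < s) (hs1 : s ≤ 1) :
    ∀ n : ℕ, s * ∑ m ∈ Finset.range n, ((m : ℝ) + 1) ^ (s - 1) ≤ (n : ℝ) ^ s := by
  intro n
  induction n with
  | zero => simp [Real.zero_rpow hs0.ne']
  | succ n ih =>
    rw [Finset.sum_range_succ, mul_add]
    have hx : (0 : ℝ) < (n : ℝ) + 1 := by positivity
    have key : s * ((n : ℝ) + 1) ^ (s - 1) ≤ ((n : ℝ) + 1) ^ s - (n : ℝ) ^ s := by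
      have hb : (-1 : ℝ) ≤ -(1 / ((n : ℝ) + 1)) := by
        rw [neg_le_neg_iff]
        exact div_le_one_of_le₀ (by linarith) hx.le
      have h := rpow_one_add_le_one_add_mul_self hb hs0.le hs1
      have h1 : (1 : ℝ) + -(1 / ((n : ℝ) + 1)) = (n : ℝ) / ((n : ℝ) + 1) := by
        field_simp
        ring
      rw [h1, Real.div_rpow (Nat.cast_nonneg n) hx.le] at h
      have h2 : (n : ℝ) ^ s ≤ (((n : ℝ) + 1) ^ s) * (1 + s * -(1 / ((n : ℝ) + 1))) := by
        have := mul_le_mul_of_nonneg_left h (Real.rpow_nonneg hx.le s)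
        rwa [mul_div_cancel₀ _ (by positivity : ((n : ℝ) + 1) ^ s ≠ 0)] at this
      have h3 : (((n : ℝ) + 1) ^ s) * (1 + s * -(1 / ((n : ℝ) + 1)))
          = ((n : ℝ) + 1) ^ s - s * ((n : ℝ) + 1) ^ (s - 1) := by
        rw [Real.rpow_sub_one hx.ne' s]
        field_simp
        ring
      rw [h3] at h2
      linarith
    push_cast
    linarith

/-- For `0 < d < 1/2`, if for every `δ > 0` we have `|a j| ≤ C₁ j^(-d-1+δ)`
and `|b j| ≤ C₂ j^(d-1+δ)` for `j ≥ 1`, then for every `δ > 0` there is `C` such that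
for all `h ≥ 1` and `j ≥ 1`:
`|∑_{m=0}^{h-1} a_{j+h-1-m} b_m| ≤ C h^(d+2δ) j^(-d-1+δ)`. -/
theorem stmt_18 (d : ℝ) (hd0 : 0 < d) (hd2 : d < 1 / 2) (a : ℕ → ℝ) (b : ℕ → ℝ)
    (ha : ∀ δ > (0 : ℝ), ∃ C₁ : ℝ, ∀ j : ℕ, 1 ≤ j → |a j| ≤ C₁ * (j : ℝ) ^ (-d - 1 + δ))
    (hb : ∀ δ > (0 : ℝ), ∃ C₂ : ℝ, ∀ j : ℕ, 1 ≤ j → |b j| ≤ C₂ * (j : ℝ) ^ (d - 1 + δ)) :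
    ∀ δ > (0 : ℝ), ∃ C : ℝ, ∀ h : ℕ, 1 ≤ h → ∀ j : ℕ, 1 ≤ j →
      |∑ m ∈ Finset.range h, a (j + h - 1 - m) * b m|
        ≤ C * (h : ℝ) ^ (d + 2 * δ) * (j : ℝ) ^ (-d - 1 + δ) := by
  intro δ hδ
  set δ' : ℝ := min δ (1/4) with hδ'def
  have hδ'0 : 0 < δ' := lt_min hδ (by norm_num)
  have hδ'δ : δ' ≤ δ := min_le_left _ _
  have hδ'4 : δ' ≤ 1/4 := min_le_right _ _
  obtain ⟨C₁, hC₁⟩ := ha δ' hδ'0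
  obtain ⟨C₂, hC₂⟩ := hb δ' hδ'0
  have hC₁0 : 0 ≤ C₁ := by
    have := hC₁ 1 le_rfl
    simp [Real.one_rpow] at this
    exact (abs_nonneg _).trans this
  have hC₂0 : 0 ≤ C₂ := by
    have := hC₂ 1 le_rfl
    simp [Real.one_rpow] at this
    exact (abs_nonneg _).trans this
  set s : ℝ := d + δ' with hsdef
  have hs0 : 0 < s := by positivity
  have hs1 : s ≤ 1 := by
    rw [hsdef]; linarith
  refine ⟨C₁ * |b 0| + C₁ * C₂ / s, ?_⟩
  intro h hh j hj
  obtain ⟨k, rfl⟩ : ∃ k, h = k + 1 := ⟨h - 1, (Nat.succ_pred_eq_of_pos hh).symm⟩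
  have hj0 : (0 : ℝ) < (j : ℝ) := by exact_mod_cast hj
  have hea : -d - 1 + δ' ≤ 0 := by linarith
  -- uniform bound on the a-factors
  have haunif : ∀ m ∈ Finset.range (k + 1), |a (j + (k+1) - 1 - m)| ≤ C₁ * (j : ℝ) ^ (-d - 1 + δ') := by
    intro m hm
    rw [Finset.mem_range] at hm
    have hidx : j ≤ j + (k+1) - 1 - m := by omega
    have hidx1 : 1 ≤ j + (k+1) - 1 - m := le_trans hj hidx
    refine (hC₁ _ hidx1).trans ?_
    have : ((j + (k+1) - 1 - m : ℕ) : ℝ) ^ (-d - 1 + δ') ≤ (j : ℝ) ^ (-d - 1 + δ') :=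
      Real.rpow_le_rpow_of_nonpos hj0 (by exact_mod_cast hidx) hea
    nlinarith [this]
  -- bound sum of |b m|
  have hbsum : ∑ m ∈ Finset.range (k + 1), |b m| ≤ |b 0| + C₂ / s * ((k+1 : ℕ) : ℝ) ^ s := by
    rw [Finset.sum_range_succ']
    have h1 : ∑ m ∈ Finset.range k, |b (m + 1)|
        ≤ C₂ * ∑ m ∈ Finset.range k, ((m : ℝ) + 1) ^ (s - 1) := by
      rw [Finset.mul_sum]
      refine Finset.sum_le_sum fun m _ => ?_
      have := hC₂ (m + 1) (Nat.le_add_left 1 m)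
      have he : d - 1 + δ' = s - 1 := by rw [hsdef]; ring
      rw [he] at this
      push_cast at this ⊢
      exact this
    have h2 : ∑ m ∈ Finset.range k, ((m : ℝ) + 1) ^ (s - 1) ≤ ((k : ℝ)) ^ s / s := by
      rw [le_div_iff₀ hs0, mul_comm]
      exact aux_sum_rpow s hs0 hs1 k
    have h3 : ((k : ℝ)) ^ s ≤ (((k+1 : ℕ)) : ℝ) ^ s := by
      apply Real.rpow_le_rpow (Nat.cast_nonneg k) (by push_cast; linarith) hs0.le
    have : C₂ * (((k : ℝ)) ^ s / s) ≤ C₂ / s * (((k+1 : ℕ)) : ℝ) ^ s := by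
      rw [div_mul_eq_mul_div, mul_div_assoc]
      gcongr
    nlinarith [mul_le_mul_of_nonneg_left h2 hC₂0]
  -- put it together
  have habs : |∑ m ∈ Finset.range (k+1), a (j + (k+1) - 1 - m) * b m|
      ≤ (C₁ * (j : ℝ) ^ (-d - 1 + δ')) * ∑ m ∈ Finset.range (k + 1), |b m| := by
    calc |∑ m ∈ Finset.range (k+1), a (j + (k+1) - 1 - m) * b m|
        ≤ ∑ m ∈ Finset.range (k+1), |a (j + (k+1) - 1 - m) * b m| :=
          Finset.abs_sum_le_sum_abs _ _
      _ ≤ ∑ m ∈ Finset.range (k+1), (C₁ * (j : ℝ) ^ (-d - 1 + δ')) * |b m| := by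
          refine Finset.sum_le_sum fun m hm => ?_
          rw [abs_mul]
          exact mul_le_mul_of_nonneg_right (haunif m hm) (abs_nonneg _)
      _ = (C₁ * (j : ℝ) ^ (-d - 1 + δ')) * ∑ m ∈ Finset.range (k + 1), |b m| := by
          rw [Finset.mul_sum]
  have hjpow : (j : ℝ) ^ (-d - 1 + δ') ≤ (j : ℝ) ^ (-d - 1 + δ) :=
    Real.rpow_le_rpow_of_exponent_le (by exact_mod_cast hj) (by linarith)
  have hjpow0 : (0 : ℝ) ≤ (j : ℝ) ^ (-d - 1 + δ') := Real.rpow_nonneg hj0.le _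
  have hjpow0' : (0 : ℝ) ≤ (j : ℝ) ^ (-d - 1 + δ) := Real.rpow_nonneg hj0.le _
  have hh1 : (1 : ℝ) ≤ ((k+1 : ℕ) : ℝ) := by exact_mod_cast hh
  have hhpow1 : (1 : ℝ) ≤ ((k+1 : ℕ) : ℝ) ^ (d + 2 * δ) :=
    Real.one_le_rpow hh1 (by positivity)
  have hhpows : ((k+1 : ℕ) : ℝ) ^ s ≤ ((k+1 : ℕ) : ℝ) ^ (d + 2 * δ) :=
    Real.rpow_le_rpow_of_exponent_le hh1 (by rw [hsdef]; linarith)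
  have hhpow0 : (0 : ℝ) ≤ ((k+1 : ℕ) : ℝ) ^ s := Real.rpow_nonneg (by positivity) _
  calc |∑ m ∈ Finset.range (k+1), a (j + (k+1) - 1 - m) * b m|
      ≤ (C₁ * (j : ℝ) ^ (-d - 1 + δ')) * (|b 0| + C₂ / s * ((k+1 : ℕ) : ℝ) ^ s) := by
        refine habs.trans (mul_le_mul_of_nonneg_left hbsum (by positivity))
    _ = C₁ * |b 0| * (j : ℝ) ^ (-d - 1 + δ')
        + C₁ * C₂ / s * ((k+1 : ℕ) : ℝ) ^ s * (j : ℝ) ^ (-d - 1 + δ') := by ring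
    _ ≤ C₁ * |b 0| * (((k+1 : ℕ) : ℝ) ^ (d + 2 * δ) * (j : ℝ) ^ (-d - 1 + δ))
        + C₁ * C₂ / s * (((k+1 : ℕ) : ℝ) ^ (d + 2 * δ)) * (j : ℝ) ^ (-d - 1 + δ) := by
        have e1 : (j : ℝ) ^ (-d - 1 + δ') ≤ ((k+1 : ℕ) : ℝ) ^ (d + 2 * δ) * (j : ℝ) ^ (-d - 1 + δ) :=
          hjpow.trans (le_mul_of_one_le_left hjpow0' hhpow1)
        have e2 : ((k+1 : ℕ) : ℝ) ^ s * (j : ℝ) ^ (-d - 1 + δ')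
            ≤ ((k+1 : ℕ) : ℝ) ^ (d + 2 * δ) * (j : ℝ) ^ (-d - 1 + δ) :=
          mul_le_mul hhpows hjpow hjpow0 (by positivity)
        have c1 : 0 ≤ C₁ * |b 0| := by positivity
        have c2 : 0 ≤ C₁ * C₂ / s := by positivity
        have := mul_le_mul_of_nonneg_left e1 c1
        have := mul_le_mul_of_nonneg_left e2 c2
        nlinarith [this]
    _ = (C₁ * |b 0| + C₁ * C₂ / s) * ((k+1 : ℕ) : ℝ) ^ (d + 2 * δ) * (j : ℝ) ^ (-d - 1 + δ) := by
        ring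
end

section
/- Let 0 < d < 1/2. Let (σ(m))_{m∈ℤ} be a real even sequence such that for every δ > 0 there is C₃(δ) with |σ(m)| ≤ C₃(δ) |m|^{2d−1+δ} for m ≠ 0 and σ(0) finite. Suppose that for every δ > 0 there is C(δ) such that the real coefficients c_{j,h} (j ≥ 1, h ≥ 1) satisfy |c_{j,h}| ≤ C(δ) h^{d+δ} j^{−d−1+δ}. Then for every δ > 0, Σ_{j=k+1}^∞ Σ_{l=k+1}^∞ c_{j,h} c_{l,h} σ(j−l) = O(h^{2d+δ} k^{−1+δ}) uniformly, i.e. there is a constant C′(δ) with |Σ_{j=k+1}^∞ Σ_{l=k+1}^∞ c_{j,h} c_{l,h} σ(j−l)| ≤ C′(δ) h^{2d+δ} k^{−1+δ} for all h ≥ 1 and k ≥ 1. -/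
open Real

/-! Auxiliary definitions and lemmas -/

/-- Weight function: `1` at `0`, `|n|^e` elsewhere. -/
noncomputable def stmt19_w (e : ℝ) (n : ℤ) : ℝ := if n = 0 then 1 else |(n : ℝ)| ^ e

lemma stmt19_w_nonneg (e : ℝ) (n : ℤ) : 0 ≤ stmt19_w e n := by
  unfold stmt19_w
  split
  · norm_num
  · positivity

lemma stmt19_w_summable {p : ℝ} (hp : 1 < p) : Summable (stmt19_w (-p)) := by
  have h1 : Summable fun n : ℤ => |(n : ℝ)| ^ (-p) := Real.summable_abs_int_rpow hp
  have h2 : Summable fun n : ℤ => if n = 0 then (1 : ℝ) else 0 := by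
    apply summable_of_ne_finset_zero (s := {(0 : ℤ)})
    intro n hn
    simp only [Finset.mem_singleton] at hn
    simp [hn]
  apply (h1.add h2).congr
  intro n
  by_cases hn : n = 0
  · simp [stmt19_w, hn, Real.zero_rpow (show -p ≠ 0 by linarith)]
  · simp [stmt19_w, hn]

/-- Core off-diagonal estimate. -/
lemma stmt19_core {d ε Kr Jr Lr M : ℝ} (hd0 : 0 < d) (hd2 : d < 1 / 2) (hε : 0 < ε)
    (h6 : 6 * ε ≤ 1 - 2 * d) (hK : 1 ≤ Kr) (hKL : Kr ≤ Lr) (hLJ : Lr ≤ Jr)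
    (hM1 : 1 ≤ M) (hMJ : M ≤ Jr) :
    Jr ^ (-d - 1 + ε) * Lr ^ (-d - 1 + ε) * M ^ (2 * d - 1 + ε)
      ≤ Kr ^ (-(1 - 5 * ε)) * Lr ^ (-(1 + ε)) * M ^ (-(1 + ε)) := by
  have hK0 : (0 : ℝ) < Kr := by linarith
  have hL0 : (0 : ℝ) < Lr := by linarith
  have hJ0 : (0 : ℝ) < Jr := by linarith
  have hM0 : (0 : ℝ) < M := by linarith
  have e1 : Jr ^ (-d - 1 + ε) = Jr ^ (-(1 - d - 3 * ε)) * Jr ^ (-(2 * d + 2 * ε)) := by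
    rw [← Real.rpow_add hJ0]
    congr 1
    ring
  have s1 : Jr ^ (-(1 - d - 3 * ε)) ≤ Lr ^ (-(1 - d - 3 * ε)) :=
    Real.rpow_le_rpow_of_nonpos hL0 hLJ (by linarith)
  have s2 : Jr ^ (-(2 * d + 2 * ε)) ≤ M ^ (-(2 * d + 2 * ε)) :=
    Real.rpow_le_rpow_of_nonpos hM0 hMJ (by linarith)
  have step1 : Jr ^ (-d - 1 + ε) ≤ Lr ^ (-(1 - d - 3 * ε)) * M ^ (-(2 * d + 2 * ε)) := by
    rw [e1]
    exact mul_le_mul s1 s2 (Real.rpow_nonneg hJ0.le _) (Real.rpow_nonneg hL0.le _)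
  have e2 : Lr ^ (-(1 - d - 3 * ε)) * Lr ^ (-d - 1 + ε)
      = Lr ^ (-(1 - 5 * ε)) * Lr ^ (-(1 + ε)) := by
    rw [← Real.rpow_add hL0, ← Real.rpow_add hL0]
    congr 1
    ring
  have e3 : M ^ (-(2 * d + 2 * ε)) * M ^ (2 * d - 1 + ε) = M ^ (-(1 + ε)) := by
    rw [← Real.rpow_add hM0]
    congr 1
    ring
  calc Jr ^ (-d - 1 + ε) * Lr ^ (-d - 1 + ε) * M ^ (2 * d - 1 + ε)
      ≤ (Lr ^ (-(1 - d - 3 * ε)) * M ^ (-(2 * d + 2 * ε))) * Lr ^ (-d - 1 + ε)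
          * M ^ (2 * d - 1 + ε) :=
        mul_le_mul_of_nonneg_right
          (mul_le_mul_of_nonneg_right step1 (Real.rpow_nonneg hL0.le _))
          (Real.rpow_nonneg hM0.le _)
    _ = (Lr ^ (-(1 - d - 3 * ε)) * Lr ^ (-d - 1 + ε))
          * (M ^ (-(2 * d + 2 * ε)) * M ^ (2 * d - 1 + ε)) := by ring
    _ = (Lr ^ (-(1 - 5 * ε)) * Lr ^ (-(1 + ε))) * M ^ (-(1 + ε)) := by rw [e2, e3]
    _ ≤ (Kr ^ (-(1 - 5 * ε)) * Lr ^ (-(1 + ε))) * M ^ (-(1 + ε)) := by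
        have hL5 : Lr ^ (-(1 - 5 * ε)) ≤ Kr ^ (-(1 - 5 * ε)) :=
          Real.rpow_le_rpow_of_nonpos hK0 hKL (by linarith)
        exact mul_le_mul_of_nonneg_right
          (mul_le_mul_of_nonneg_right hL5 (Real.rpow_nonneg hL0.le _))
          (Real.rpow_nonneg hM0.le _)
    _ = Kr ^ (-(1 - 5 * ε)) * Lr ^ (-(1 + ε)) * M ^ (-(1 + ε)) := by ring

/-- Diagonal estimate. -/
lemma stmt19_diag {d ε Kr Jr : ℝ} (hd0 : 0 < d) (hε : 0 < ε) (h6 : 6 * ε ≤ 1 - 2 * d)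
    (hK : 1 ≤ Kr) (hKJ : Kr ≤ Jr) :
    Jr ^ (-d - 1 + ε) * Jr ^ (-d - 1 + ε) ≤ Kr ^ (-(1 - 5 * ε)) * Jr ^ (-(1 + ε)) := by
  have hK0 : (0 : ℝ) < Kr := by linarith
  have hJ0 : (0 : ℝ) < Jr := by linarith
  have hJ1 : (1 : ℝ) ≤ Jr := le_trans hK hKJ
  have e1 : Jr ^ (-d - 1 + ε) * Jr ^ (-d - 1 + ε)
      = Jr ^ (-(1 - 5 * ε)) * Jr ^ (-2 * d - 1 - 3 * ε) := by
    rw [← Real.rpow_add hJ0, ← Real.rpow_add hJ0]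
    congr 1
    ring
  rw [e1]
  apply mul_le_mul
  · exact Real.rpow_le_rpow_of_nonpos hK0 hKJ (by linarith)
  · exact Real.rpow_le_rpow_of_exponent_le hJ1 (by linarith)
  · exact Real.rpow_nonneg hJ0.le _
  · exact Real.rpow_nonneg hK0.le _

/-- Key pointwise estimate. -/
lemma stmt19_key {d ε : ℝ} (hd0 : 0 < d) (hd2 : d < 1 / 2) (hε : 0 < ε)
    (h6 : 6 * ε ≤ 1 - 2 * d) (k j l : ℕ) (hk : 1 ≤ k) :
    ((k + 1 + j : ℕ) : ℝ) ^ (-d - 1 + ε) * ((k + 1 + l : ℕ) : ℝ) ^ (-d - 1 + ε)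
        * stmt19_w (2 * d - 1 + ε) ((j : ℤ) - l)
      ≤ (k : ℝ) ^ (-(1 - 5 * ε)) *
        ((((k + 1 + j : ℕ) : ℝ) ^ (-(1 + ε)) + ((k + 1 + l : ℕ) : ℝ) ^ (-(1 + ε)))
          * stmt19_w (-(1 + ε)) ((j : ℤ) - l)) := by
  have hk1 : (1 : ℝ) ≤ (k : ℝ) := by exact_mod_cast hk
  have hcj : ((k + 1 + j : ℕ) : ℝ) = (k : ℝ) + 1 + (j : ℝ) := by push_cast; ring
  have hcl : ((k + 1 + l : ℕ) : ℝ) = (k : ℝ) + 1 + (l : ℝ) := by push_cast; ring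
  have hj0 : (0 : ℝ) ≤ (j : ℝ) := Nat.cast_nonneg j
  have hl0 : (0 : ℝ) ≤ (l : ℝ) := Nat.cast_nonneg l
  by_cases hjl : j = l
  · subst hjl
    have hw1 : stmt19_w (2 * d - 1 + ε) ((j : ℤ) - j) = 1 := by simp [stmt19_w]
    have hw2 : stmt19_w (-(1 + ε)) ((j : ℤ) - j) = 1 := by simp [stmt19_w]
    rw [hw1, hw2, mul_one, mul_one]
    have hdiag := stmt19_diag hd0 hε h6 hk1
      (show (k : ℝ) ≤ ((k + 1 + j : ℕ) : ℝ) by rw [hcj]; linarith)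
    calc ((k + 1 + j : ℕ) : ℝ) ^ (-d - 1 + ε) * ((k + 1 + j : ℕ) : ℝ) ^ (-d - 1 + ε)
        ≤ (k : ℝ) ^ (-(1 - 5 * ε)) * ((k + 1 + j : ℕ) : ℝ) ^ (-(1 + ε)) := hdiag
      _ ≤ (k : ℝ) ^ (-(1 - 5 * ε)) *
            (((k + 1 + j : ℕ) : ℝ) ^ (-(1 + ε)) + ((k + 1 + j : ℕ) : ℝ) ^ (-(1 + ε))) := by
          apply mul_le_mul_of_nonneg_left _ (Real.rpow_nonneg (by linarith) _)
          have := Real.rpow_nonneg (show (0:ℝ) ≤ ((k + 1 + j : ℕ) : ℝ) by rw [hcj]; linarith)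
            (-(1 + ε))
          linarith
  · have hmne : (j : ℤ) - l ≠ 0 := by
      intro hcon
      apply hjl
      have : (j : ℤ) = (l : ℤ) := by linarith [sub_eq_zero.mp hcon]
      exact_mod_cast this
    simp only [stmt19_w, if_neg hmne]
    have habs : |(((j : ℤ) - l : ℤ) : ℝ)| = |(j : ℝ) - (l : ℝ)| := by push_cast; rfl
    rw [habs]
    rcases lt_or_gt_of_ne hjl with hlt | hgt
    · -- j < l
      have hM : |(j : ℝ) - (l : ℝ)| = (l : ℝ) - j := by
        rw [abs_of_nonpos (sub_nonpos.mpr (show (j : ℝ) ≤ (l : ℝ) by exact_mod_cast hlt.le))]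
        ring
      rw [hM]
      have hj1l : (j : ℝ) + 1 ≤ (l : ℝ) := by exact_mod_cast hlt
      have hcore := stmt19_core hd0 hd2 hε h6 hk1
        (show (k : ℝ) ≤ ((k + 1 + j : ℕ) : ℝ) by rw [hcj]; linarith)
        (show ((k + 1 + j : ℕ) : ℝ) ≤ ((k + 1 + l : ℕ) : ℝ) by rw [hcj, hcl]; linarith)
        (show (1 : ℝ) ≤ (l : ℝ) - j by linarith)
        (show (l : ℝ) - j ≤ ((k + 1 + l : ℕ) : ℝ) by rw [hcl]; linarith)
      have hrearr : ((k + 1 + j : ℕ) : ℝ) ^ (-d - 1 + ε) * ((k + 1 + l : ℕ) : ℝ) ^ (-d - 1 + ε)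
          * ((l : ℝ) - j) ^ (2 * d - 1 + ε)
          = ((k + 1 + l : ℕ) : ℝ) ^ (-d - 1 + ε) * ((k + 1 + j : ℕ) : ℝ) ^ (-d - 1 + ε)
          * ((l : ℝ) - j) ^ (2 * d - 1 + ε) := by ring
      rw [hrearr]
      refine hcore.trans ?_
      have hadd : (0 : ℝ) ≤ ((k + 1 + l : ℕ) : ℝ) ^ (-(1 + ε)) :=
        Real.rpow_nonneg (by rw [hcl]; linarith) _
      have hknn : (0 : ℝ) ≤ (k : ℝ) ^ (-(1 - 5 * ε)) := Real.rpow_nonneg (by linarith) _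
      have hMnn : (0 : ℝ) ≤ ((l : ℝ) - j) ^ (-(1 + ε)) :=
        Real.rpow_nonneg (by linarith) _
      nlinarith [mul_nonneg (mul_nonneg hknn hadd) hMnn]
    · -- l < j
      have hM : |(j : ℝ) - (l : ℝ)| = (j : ℝ) - l := by
        rw [abs_of_nonneg (sub_nonneg.mpr (show (l : ℝ) ≤ (j : ℝ) by exact_mod_cast hgt.le))]
      rw [hM]
      have hl1j : (l : ℝ) + 1 ≤ (j : ℝ) := by exact_mod_cast hgt
      have hcore := stmt19_core hd0 hd2 hε h6 hk1
        (show (k : ℝ) ≤ ((k + 1 + l : ℕ) : ℝ) by rw [hcl]; linarith)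
        (show ((k + 1 + l : ℕ) : ℝ) ≤ ((k + 1 + j : ℕ) : ℝ) by rw [hcj, hcl]; linarith)
        (show (1 : ℝ) ≤ (j : ℝ) - l by linarith)
        (show (j : ℝ) - l ≤ ((k + 1 + j : ℕ) : ℝ) by rw [hcj]; linarith)
      refine hcore.trans ?_
      have hadd : (0 : ℝ) ≤ ((k + 1 + j : ℕ) : ℝ) ^ (-(1 + ε)) :=
        Real.rpow_nonneg (by rw [hcj]; linarith) _
      have hknn : (0 : ℝ) ≤ (k : ℝ) ^ (-(1 - 5 * ε)) := Real.rpow_nonneg (by linarith) _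
      have hMnn : (0 : ℝ) ≤ ((j : ℝ) - l) ^ (-(1 + ε)) :=
        Real.rpow_nonneg (by linarith) _
      nlinarith [mul_nonneg (mul_nonneg hknn hadd) hMnn]

/-- Let `0 < d < 1/2`, let `σ` be even with `|σ m| ≤ C₃(δ) |m|^(2d-1+δ)` for
`m ≠ 0` (for every `δ > 0`), and suppose the coefficients `c j h` satisfy
`|c j h| ≤ C(δ) h^(d+δ) j^(-d-1+δ)`. Then for every `δ > 0` there is `C'` with
`|∑_{j,l>k} c j h * c l h * σ(j-l)| ≤ C' h^(2d+δ) k^(-1+δ)` for all `h ≥ 1`, `k ≥ 1`. -/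
theorem stmt_19 (d : ℝ) (hd0 : 0 < d) (hd2 : d < 1 / 2)
    (σ : ℤ → ℝ) (c : ℕ → ℕ → ℝ)
    (hσeven : ∀ m : ℤ, σ (-m) = σ m)
    (hσ : ∀ δ > (0 : ℝ), ∃ C₃ : ℝ, ∀ m : ℤ, m ≠ 0 →
      |σ m| ≤ C₃ * (|m| : ℝ) ^ (2 * d - 1 + δ))
    (hc : ∀ δ > (0 : ℝ), ∃ C : ℝ, ∀ j : ℕ, 1 ≤ j → ∀ h : ℕ, 1 ≤ h →
      |c j h| ≤ C * (h : ℝ) ^ (d + δ) * (j : ℝ) ^ (-d - 1 + δ)) :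
    ∀ δ > (0 : ℝ), ∃ C' : ℝ, ∀ h : ℕ, 1 ≤ h → ∀ k : ℕ, 1 ≤ k →
      |∑' j : ℕ, ∑' l : ℕ, c (k + 1 + j) h * c (k + 1 + l) h * σ ((j : ℤ) - l)|
        ≤ C' * (h : ℝ) ^ (2 * d + δ) * (k : ℝ) ^ (-1 + δ) := by
  intro δ hδ
  set ε : ℝ := min (δ / 5) ((1 - 2 * d) / 6) with hεdef
  have hε : 0 < ε := lt_min (by linarith) (by linarith)
  have hε5 : 5 * ε ≤ δ := by
    have := min_le_left (δ / 5) ((1 - 2 * d) / 6)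
    rw [← hεdef] at this
    linarith
  have h6 : 6 * ε ≤ 1 - 2 * d := by
    have := min_le_right (δ / 5) ((1 - 2 * d) / 6)
    rw [← hεdef] at this
    linarith
  obtain ⟨C, hC⟩ := hc ε hε
  obtain ⟨C₃, hC₃⟩ := hσ ε hε
  set C₀ : ℝ := max C 0 with hC₀def
  have hC₀ : 0 ≤ C₀ := le_max_right _ _
  set B : ℝ := max C₃ |σ 0| with hBdef
  have hB : 0 ≤ B := le_trans (abs_nonneg _) (le_max_right _ _)
  have hp1 : (1 : ℝ) < 1 + ε := by linarith
  have hWsum : Summable (stmt19_w (-(1 + ε))) := stmt19_w_summable hp1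
  set Z : ℝ := ∑' n : ℤ, stmt19_w (-(1 + ε)) n with hZdef
  have hZ0 : 0 ≤ Z := tsum_nonneg fun n => stmt19_w_nonneg _ _
  have hVsum : Summable (fun n : ℕ => ((n : ℝ) + 1) ^ (-(1 + ε))) := by
    have h0 : Summable (fun n : ℕ => (n : ℝ) ^ (-(1 + ε))) :=
      Real.summable_nat_rpow.mpr (by linarith)
    have h1 := (summable_nat_add_iff 1).mpr h0
    apply h1.congr
    intro n
    rw [Nat.cast_add, Nat.cast_one]
  set Z2 : ℝ := ∑' n : ℕ, ((n : ℝ) + 1) ^ (-(1 + ε)) with hZ2def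
  have hZ20 : 0 ≤ Z2 := tsum_nonneg fun n => Real.rpow_nonneg (by positivity) _
  refine ⟨C₀ ^ 2 * B * (2 * (Z2 * Z)), ?_⟩
  intro h hh k hk
  have hh1 : (1 : ℝ) ≤ (h : ℝ) := by exact_mod_cast hh
  have hk1 : (1 : ℝ) ≤ (k : ℝ) := by exact_mod_cast hk
  have hh0 : (0 : ℝ) < (h : ℝ) := by linarith
  -- bound on σ via the weight function
  have hσW : ∀ m : ℤ, |σ m| ≤ B * stmt19_w (2 * d - 1 + ε) m := by
    intro m
    by_cases hm : m = 0
    · subst hm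
      have hw : stmt19_w (2 * d - 1 + ε) 0 = 1 := by simp [stmt19_w]
      rw [hw, mul_one]
      exact le_max_right C₃ |σ 0|
    · simp only [stmt19_w, if_neg hm]
      calc |σ m| ≤ C₃ * |(m : ℝ)| ^ (2 * d - 1 + ε) := hC₃ m hm
        _ ≤ B * |(m : ℝ)| ^ (2 * d - 1 + ε) :=
            mul_le_mul_of_nonneg_right (le_max_left _ _)
              (Real.rpow_nonneg (abs_nonneg _) _)
  -- bound on coefficients
  have hcb : ∀ j : ℕ, |c (k + 1 + j) h| ≤
      C₀ * (h : ℝ) ^ (d + ε) * ((k + 1 + j : ℕ) : ℝ) ^ (-d - 1 + ε) := by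
    intro j
    have h1 := hC (k + 1 + j) (by omega) h hh
    refine h1.trans ?_
    have hxy : (0 : ℝ) ≤ (h : ℝ) ^ (d + ε) * ((k + 1 + j : ℕ) : ℝ) ^ (-d - 1 + ε) := by
      positivity
    calc C * (h : ℝ) ^ (d + ε) * ((k + 1 + j : ℕ) : ℝ) ^ (-d - 1 + ε)
        = C * ((h : ℝ) ^ (d + ε) * ((k + 1 + j : ℕ) : ℝ) ^ (-d - 1 + ε)) := by ring
      _ ≤ C₀ * ((h : ℝ) ^ (d + ε) * ((k + 1 + j : ℕ) : ℝ) ^ (-d - 1 + ε)) :=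
          mul_le_mul_of_nonneg_right (le_max_left _ _) hxy
      _ = C₀ * (h : ℝ) ^ (d + ε) * ((k + 1 + j : ℕ) : ℝ) ^ (-d - 1 + ε) := by ring
  -- the pointwise real bound
  have hreal : ∀ j l : ℕ, |c (k + 1 + j) h * c (k + 1 + l) h * σ ((j : ℤ) - l)| ≤
      (C₀ ^ 2 * B * ((h : ℝ) ^ (d + ε) * (h : ℝ) ^ (d + ε)) * (k : ℝ) ^ (-(1 - 5 * ε))) *
        ((((k + 1 + j : ℕ) : ℝ) ^ (-(1 + ε)) + ((k + 1 + l : ℕ) : ℝ) ^ (-(1 + ε)))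
          * stmt19_w (-(1 + ε)) ((j : ℤ) - l)) := by
    intro j l
    have hkey := stmt19_key hd0 hd2 hε h6 k j l hk
    have hJnn : (0 : ℝ) ≤ ((k + 1 + j : ℕ) : ℝ) ^ (-d - 1 + ε) :=
      Real.rpow_nonneg (Nat.cast_nonneg _) _
    have hLnn : (0 : ℝ) ≤ ((k + 1 + l : ℕ) : ℝ) ^ (-d - 1 + ε) :=
      Real.rpow_nonneg (Nat.cast_nonneg _) _
    have hhnn : (0 : ℝ) ≤ (h : ℝ) ^ (d + ε) := Real.rpow_nonneg hh0.le _
    have hb1 : (0 : ℝ) ≤ C₀ * (h : ℝ) ^ (d + ε) * ((k + 1 + j : ℕ) : ℝ) ^ (-d - 1 + ε) :=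
      mul_nonneg (mul_nonneg hC₀ hhnn) hJnn
    have hb2 : (0 : ℝ) ≤ (C₀ * (h : ℝ) ^ (d + ε) * ((k + 1 + j : ℕ) : ℝ) ^ (-d - 1 + ε))
        * (C₀ * (h : ℝ) ^ (d + ε) * ((k + 1 + l : ℕ) : ℝ) ^ (-d - 1 + ε)) :=
      mul_nonneg hb1 (mul_nonneg (mul_nonneg hC₀ hhnn) hLnn)
    calc |c (k + 1 + j) h * c (k + 1 + l) h * σ ((j : ℤ) - l)|
        = |c (k + 1 + j) h| * |c (k + 1 + l) h| * |σ ((j : ℤ) - l)| := by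
          rw [abs_mul, abs_mul]
      _ ≤ ((C₀ * (h : ℝ) ^ (d + ε) * ((k + 1 + j : ℕ) : ℝ) ^ (-d - 1 + ε))
            * (C₀ * (h : ℝ) ^ (d + ε) * ((k + 1 + l : ℕ) : ℝ) ^ (-d - 1 + ε)))
            * (B * stmt19_w (2 * d - 1 + ε) ((j : ℤ) - l)) := by
          refine mul_le_mul ?_ (hσW _) (abs_nonneg _) hb2
          exact mul_le_mul (hcb j) (hcb l) (abs_nonneg _) hb1
      _ = (C₀ ^ 2 * B * ((h : ℝ) ^ (d + ε) * (h : ℝ) ^ (d + ε)))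
            * (((k + 1 + j : ℕ) : ℝ) ^ (-d - 1 + ε) * ((k + 1 + l : ℕ) : ℝ) ^ (-d - 1 + ε)
              * stmt19_w (2 * d - 1 + ε) ((j : ℤ) - l)) := by ring
      _ ≤ (C₀ ^ 2 * B * ((h : ℝ) ^ (d + ε) * (h : ℝ) ^ (d + ε)))
            * ((k : ℝ) ^ (-(1 - 5 * ε)) *
              ((((k + 1 + j : ℕ) : ℝ) ^ (-(1 + ε)) + ((k + 1 + l : ℕ) : ℝ) ^ (-(1 + ε)))
                * stmt19_w (-(1 + ε)) ((j : ℤ) - l))) := by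
          apply mul_le_mul_of_nonneg_left hkey
          have : (0 : ℝ) ≤ C₀ ^ 2 := sq_nonneg _
          exact mul_nonneg (mul_nonneg this hB) (mul_nonneg hhnn hhnn)
      _ = (C₀ ^ 2 * B * ((h : ℝ) ^ (d + ε) * (h : ℝ) ^ (d + ε)) * (k : ℝ) ^ (-(1 - 5 * ε))) *
            ((((k + 1 + j : ℕ) : ℝ) ^ (-(1 + ε)) + ((k + 1 + l : ℕ) : ℝ) ^ (-(1 + ε)))
              * stmt19_w (-(1 + ε)) ((j : ℤ) - l)) := by ring
  -- ENNReal abbreviations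
  set P : ℝ := C₀ ^ 2 * B * ((h : ℝ) ^ (d + ε) * (h : ℝ) ^ (d + ε)) * (k : ℝ) ^ (-(1 - 5 * ε))
    with hPdef
  have hPnn : 0 ≤ P := by
    rw [hPdef]
    have h1 : (0 : ℝ) ≤ C₀ ^ 2 := sq_nonneg _
    have h2 : (0 : ℝ) ≤ (h : ℝ) ^ (d + ε) := Real.rpow_nonneg hh0.le _
    have h3 : (0 : ℝ) ≤ (k : ℝ) ^ (-(1 - 5 * ε)) := Real.rpow_nonneg (by linarith) _
    exact mul_nonneg (mul_nonneg (mul_nonneg h1 hB) (mul_nonneg h2 h2)) h3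
  set Ae : ℕ → ENNReal := fun j => ENNReal.ofReal (((k + 1 + j : ℕ) : ℝ) ^ (-(1 + ε)))
    with hAedef
  set We : ℕ → ℕ → ENNReal := fun j l => ENNReal.ofReal (stmt19_w (-(1 + ε)) ((j : ℤ) - l))
    with hWedef
  have hZe : ENNReal.ofReal Z = ∑' n : ℤ, ENNReal.ofReal (stmt19_w (-(1 + ε)) n) :=
    ENNReal.ofReal_tsum_of_nonneg (fun n => stmt19_w_nonneg _ _) hWsum
  have hWle : ∀ j : ℕ, ∑' l : ℕ, We j l ≤ ENNReal.ofReal Z := by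
    intro j
    have hinj : Function.Injective (fun l : ℕ => (j : ℤ) - l) := by
      intro a b hab
      simp only at hab
      omega
    rw [hZe]
    exact ENNReal.tsum_comp_le_tsum_of_injective hinj
      (fun n => ENNReal.ofReal (stmt19_w (-(1 + ε)) n))
  have hWle' : ∀ l : ℕ, ∑' j : ℕ, We j l ≤ ENNReal.ofReal Z := by
    intro l
    have hinj : Function.Injective (fun j : ℕ => (j : ℤ) - l) := by
      intro a b hab
      simp only at hab
      omega
    rw [hZe]
    exact ENNReal.tsum_comp_le_tsum_of_injective hinj
      (fun n => ENNReal.ofReal (stmt19_w (-(1 + ε)) n))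
  have hAle : ∑' j : ℕ, Ae j ≤ ENNReal.ofReal Z2 := by
    have hZ2e : ENNReal.ofReal Z2 = ∑' n : ℕ, ENNReal.ofReal (((n : ℝ) + 1) ^ (-(1 + ε))) :=
      ENNReal.ofReal_tsum_of_nonneg (fun n => Real.rpow_nonneg (by positivity) _) hVsum
    rw [hZ2e]
    apply ENNReal.tsum_le_tsum
    intro j
    apply ENNReal.ofReal_le_ofReal
    apply Real.rpow_le_rpow_of_nonpos (by positivity) ?_ (by linarith)
    push_cast
    linarith
  -- the inner double sum bound in ENNReal
  have hinner : ∑' pr : ℕ × ℕ, (Ae pr.1 + Ae pr.2) * We pr.1 pr.2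
      ≤ 2 * (ENNReal.ofReal Z2 * ENNReal.ofReal Z) := by
    calc ∑' pr : ℕ × ℕ, (Ae pr.1 + Ae pr.2) * We pr.1 pr.2
        = ∑' j : ℕ, ∑' l : ℕ, (Ae j + Ae l) * We j l := ENNReal.tsum_prod'
      _ = ∑' j : ℕ, ∑' l : ℕ, (Ae j * We j l + Ae l * We j l) := by
          exact tsum_congr fun j => tsum_congr fun l => add_mul _ _ _
      _ = ∑' j : ℕ, ((∑' l : ℕ, Ae j * We j l) + ∑' l : ℕ, Ae l * We j l) :=
          tsum_congr fun j => ENNReal.tsum_add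
      _ = (∑' j : ℕ, ∑' l : ℕ, Ae j * We j l) + ∑' j : ℕ, ∑' l : ℕ, Ae l * We j l :=
          ENNReal.tsum_add
      _ = (∑' j : ℕ, Ae j * ∑' l : ℕ, We j l) + ∑' l : ℕ, ∑' j : ℕ, Ae l * We j l := by
          rw [ENNReal.tsum_comm (f := fun j l => Ae l * We j l)]
          congr 1
          exact tsum_congr fun j => ENNReal.tsum_mul_left
      _ = (∑' j : ℕ, Ae j * ∑' l : ℕ, We j l) + ∑' l : ℕ, Ae l * ∑' j : ℕ, We j l := by
          congr 1
          exact tsum_congr fun l => ENNReal.tsum_mul_left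
      _ ≤ (∑' j : ℕ, Ae j * ENNReal.ofReal Z) + ∑' l : ℕ, Ae l * ENNReal.ofReal Z := by
          apply add_le_add
          · exact ENNReal.tsum_le_tsum fun j => mul_le_mul_right (hWle j) _
          · exact ENNReal.tsum_le_tsum fun l => mul_le_mul_right (hWle' l) _
      _ = (∑' j : ℕ, Ae j) * ENNReal.ofReal Z + (∑' l : ℕ, Ae l) * ENNReal.ofReal Z := by
          congr 1 <;> exact ENNReal.tsum_mul_right
      _ ≤ ENNReal.ofReal Z2 * ENNReal.ofReal Z + ENNReal.ofReal Z2 * ENNReal.ofReal Z :=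
          add_le_add (mul_le_mul_left hAle _) (mul_le_mul_left hAle _)
      _ = 2 * (ENNReal.ofReal Z2 * ENNReal.ofReal Z) := (two_mul _).symm
  -- the full product-sum bound in ENNReal
  have hprod : ∑' pr : ℕ × ℕ,
      ENNReal.ofReal |c (k + 1 + pr.1) h * c (k + 1 + pr.2) h * σ ((pr.1 : ℤ) - pr.2)|
      ≤ ENNReal.ofReal (P * (2 * (Z2 * Z))) := by
    calc ∑' pr : ℕ × ℕ,
        ENNReal.ofReal |c (k + 1 + pr.1) h * c (k + 1 + pr.2) h * σ ((pr.1 : ℤ) - pr.2)|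
        ≤ ∑' pr : ℕ × ℕ, ENNReal.ofReal P * ((Ae pr.1 + Ae pr.2) * We pr.1 pr.2) := by
          apply ENNReal.tsum_le_tsum
          intro pr
          have h1 := hreal pr.1 pr.2
          calc ENNReal.ofReal |c (k + 1 + pr.1) h * c (k + 1 + pr.2) h
                * σ ((pr.1 : ℤ) - pr.2)|
              ≤ ENNReal.ofReal (P * ((((k + 1 + pr.1 : ℕ) : ℝ) ^ (-(1 + ε))
                  + ((k + 1 + pr.2 : ℕ) : ℝ) ^ (-(1 + ε)))
                  * stmt19_w (-(1 + ε)) ((pr.1 : ℤ) - pr.2))) :=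
                ENNReal.ofReal_le_ofReal h1
            _ = ENNReal.ofReal P * ((Ae pr.1 + Ae pr.2) * We pr.1 pr.2) := by
                simp only [hAedef, hWedef]
                rw [ENNReal.ofReal_mul hPnn]
                congr 1
                rw [ENNReal.ofReal_mul (show (0:ℝ) ≤ ((k + 1 + pr.1 : ℕ) : ℝ) ^ (-(1 + ε))
                    + ((k + 1 + pr.2 : ℕ) : ℝ) ^ (-(1 + ε)) by positivity),
                  ENNReal.ofReal_add (by positivity) (by positivity)]
      _ = ENNReal.ofReal P * ∑' pr : ℕ × ℕ, (Ae pr.1 + Ae pr.2) * We pr.1 pr.2 :=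
          ENNReal.tsum_mul_left
      _ ≤ ENNReal.ofReal P * (2 * (ENNReal.ofReal Z2 * ENNReal.ofReal Z)) :=
          mul_le_mul_right hinner _
      _ = ENNReal.ofReal (P * (2 * (Z2 * Z))) := by
          rw [ENNReal.ofReal_mul hPnn, ENNReal.ofReal_mul (by norm_num : (0:ℝ) ≤ 2),
            ENNReal.ofReal_mul hZ20, ENNReal.ofReal_ofNat]
  -- summability on ℕ × ℕ
  have hne : (∑' pr : ℕ × ℕ,
      ENNReal.ofReal |c (k + 1 + pr.1) h * c (k + 1 + pr.2) h * σ ((pr.1 : ℤ) - pr.2)|) ≠ ⊤ :=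
    ne_top_of_le_ne_top ENNReal.ofReal_ne_top hprod
  have hsum_abs : Summable (fun pr : ℕ × ℕ =>
      |c (k + 1 + pr.1) h * c (k + 1 + pr.2) h * σ ((pr.1 : ℤ) - pr.2)|) := by
    have h1 := ENNReal.summable_toReal hne
    exact h1.congr fun pr => ENNReal.toReal_ofReal (abs_nonneg _)
  have hsumT : Summable (fun pr : ℕ × ℕ =>
      c (k + 1 + pr.1) h * c (k + 1 + pr.2) h * σ ((pr.1 : ℤ) - pr.2)) :=
    hsum_abs.of_abs
  have hEq : ∑' j : ℕ, ∑' l : ℕ, c (k + 1 + j) h * c (k + 1 + l) h * σ ((j : ℤ) - l)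
      = ∑' pr : ℕ × ℕ, c (k + 1 + pr.1) h * c (k + 1 + pr.2) h * σ ((pr.1 : ℤ) - pr.2) :=
    (Summable.tsum_prod' hsumT fun b => hsumT.prod_factor b).symm
  rw [hEq]
  have habs_le : |∑' pr : ℕ × ℕ, c (k + 1 + pr.1) h * c (k + 1 + pr.2) h
      * σ ((pr.1 : ℤ) - pr.2)| ≤ ∑' pr : ℕ × ℕ,
      |c (k + 1 + pr.1) h * c (k + 1 + pr.2) h * σ ((pr.1 : ℤ) - pr.2)| := by
    have hn := norm_tsum_le_tsum_norm (f := fun pr : ℕ × ℕ =>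
      c (k + 1 + pr.1) h * c (k + 1 + pr.2) h * σ ((pr.1 : ℤ) - pr.2))
      (by simpa [Real.norm_eq_abs, abs_mul] using hsum_abs)
    simpa [Real.norm_eq_abs, abs_mul] using hn
  have hsum_le : ∑' pr : ℕ × ℕ,
      |c (k + 1 + pr.1) h * c (k + 1 + pr.2) h * σ ((pr.1 : ℤ) - pr.2)|
      ≤ P * (2 * (Z2 * Z)) := by
    have hRHSnn : (0 : ℝ) ≤ P * (2 * (Z2 * Z)) := by positivity
    have h2 : ENNReal.ofReal (∑' pr : ℕ × ℕ,
        |c (k + 1 + pr.1) h * c (k + 1 + pr.2) h * σ ((pr.1 : ℤ) - pr.2)|)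
        ≤ ENNReal.ofReal (P * (2 * (Z2 * Z))) := by
      rw [ENNReal.ofReal_tsum_of_nonneg (fun pr => abs_nonneg _) hsum_abs]
      exact hprod
    exact (ENNReal.ofReal_le_ofReal_iff hRHSnn).mp h2
  refine (habs_le.trans hsum_le).trans ?_
  -- final exponent comparisons
  have e1 : (h : ℝ) ^ (d + ε) * (h : ℝ) ^ (d + ε) = (h : ℝ) ^ ((d + ε) + (d + ε)) :=
    (Real.rpow_add hh0 _ _).symm
  have le1 : (h : ℝ) ^ ((d + ε) + (d + ε)) ≤ (h : ℝ) ^ (2 * d + δ) :=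
    Real.rpow_le_rpow_of_exponent_le hh1 (by linarith)
  have le1' : (h : ℝ) ^ (d + ε) * (h : ℝ) ^ (d + ε) ≤ (h : ℝ) ^ (2 * d + δ) := by
    rw [e1]; exact le1
  have le2 : (k : ℝ) ^ (-(1 - 5 * ε)) ≤ (k : ℝ) ^ (-1 + δ) :=
    Real.rpow_le_rpow_of_exponent_le hk1 (by linarith)
  have hcoef : (0 : ℝ) ≤ C₀ ^ 2 * B * (2 * (Z2 * Z)) := by
    have := sq_nonneg C₀
    have h2 : (0 : ℝ) ≤ 2 * (Z2 * Z) := by positivity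
    exact mul_nonneg (mul_nonneg this hB) h2
  calc P * (2 * (Z2 * Z))
      = (C₀ ^ 2 * B * (2 * (Z2 * Z))) * ((h : ℝ) ^ (d + ε) * (h : ℝ) ^ (d + ε))
        * (k : ℝ) ^ (-(1 - 5 * ε)) := by rw [hPdef]; ring
    _ ≤ (C₀ ^ 2 * B * (2 * (Z2 * Z))) * (h : ℝ) ^ (2 * d + δ) * (k : ℝ) ^ (-1 + δ) := by
        apply mul_le_mul
        · exact mul_le_mul_of_nonneg_left le1' hcoef
        · exact le2
        · exact Real.rpow_nonneg (by linarith) _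
        · exact mul_nonneg hcoef (Real.rpow_nonneg (by linarith) _)
end
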